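/- The groups PL_2(ℝ) and PL_2(I) are isomorphic as groups. -/

import Mathlib

/-- A real number is dyadic rational if it has the form `k / 2 ^ n`. -/
def IsDyadic (t : ℝ) : Prop := ∃ (k : ℤ) (n : ℕ), t = (k : ℝ) / 2 ^ n

/-- An (orientation-preserving, i.e. order-preserving) homeomorphism of `ℝ`
belongs to `PL₂(ℝ)` if it has finitely many breakpoints `t₀ < t₁ < ⋯ < tₘ`,
each with dyadic rational coordinates, it is affine with slope an integer
power of `2` on each piece `[tᵢ, tᵢ₊₁]`, and there are integers `a`, `b` with
`f(s) = s - a` for `s ≤ t₀` and `f(s) = s - b` for `s ≥ tₘ`. -/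
def IsPL2R (f : ℝ ≃o ℝ) : Prop :=
  ∃ (m : ℕ) (t : Fin (m + 1) → ℝ) (z : Fin m → ℤ) (a b : ℤ),
    StrictMono t ∧ (∀ i, IsDyadic (t i) ∧ IsDyadic (f (t i))) ∧
    (∀ s : ℝ, s ≤ t 0 → f s = s - a) ∧
    (∀ s : ℝ, t (Fin.last m) ≤ s → f s = s - b) ∧
    (∀ (i : Fin m), ∀ s ∈ Set.Icc (t i.castSucc) (t i.succ),
      f s = f (t i.castSucc) + (2 : ℝ) ^ (z i) * (s - t i.castSucc))

/-- An order-preserving homeomorphism of `[0,1]` belongs to `PL₂(I)` if there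
is a finite dyadic partition `0 = t₀ < ⋯ < tₘ = 1` on each piece of which the
map is affine with slope an integer power of `2`. -/
def IsPL2I (f : Set.Icc (0:ℝ) 1 ≃o Set.Icc (0:ℝ) 1) : Prop :=
  ∃ (m : ℕ) (t : Fin (m + 1) → ℝ) (z : Fin m → ℤ),
    t 0 = 0 ∧ t (Fin.last m) = 1 ∧ StrictMono t ∧ (∀ i, IsDyadic (t i)) ∧
    ∀ (i : Fin m) (u v : Set.Icc (0:ℝ) 1),
      (u : ℝ) ∈ Set.Icc (t i.castSucc) (t i.succ) →
      (v : ℝ) ∈ Set.Icc (t i.castSucc) (t i.succ) →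
      (f u : ℝ) - (f v : ℝ) = (2 : ℝ) ^ (z i) * ((u : ℝ) - (v : ℝ))

lemma isDyadic_iff {x : ℝ} : IsDyadic x ↔ ∃ (k z : ℤ), x = (k : ℝ) * 2 ^ z := by
  constructor
  · rintro ⟨k, n, rfl⟩
    exact ⟨k, -n, by rw [zpow_neg, zpow_natCast]; ring⟩
  · rintro ⟨k, z, rfl⟩
    rcases le_or_gt 0 z with hz | hz
    · exact ⟨k * 2 ^ z.toNat, 0, by push_cast [← zpow_natCast (2:ℝ), Int.toNat_of_nonneg hz]; ring⟩
    · refine ⟨k, (-z).toNat, ?_⟩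
      rw [← zpow_natCast (2:ℝ), Int.toNat_of_nonneg (by omega)]
      rw [zpow_neg, div_eq_mul_inv, inv_inv]

lemma IsDyadic.intCast (k : ℤ) : IsDyadic (k : ℝ) := ⟨k, 0, by simp⟩

lemma IsDyadic.zero : IsDyadic (0:ℝ) := ⟨0, 0, by simp⟩
lemma IsDyadic.one : IsDyadic (1:ℝ) := ⟨1, 0, by simp⟩

lemma IsDyadic.add {x y : ℝ} (hx : IsDyadic x) (hy : IsDyadic y) : IsDyadic (x + y) := by
  rw [isDyadic_iff] at *
  obtain ⟨k, a, rfl⟩ := hx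
  obtain ⟨l, b, rfl⟩ := hy
  rcases le_total a b with h | h
  · refine ⟨k + l * 2 ^ (b - a).toNat, a, ?_⟩
    push_cast
    rw [add_mul, mul_assoc, ← zpow_natCast (2:ℝ), ← zpow_add₀ (two_ne_zero), Int.toNat_of_nonneg (by omega)]
    ring_nf
  · refine ⟨l + k * 2 ^ (a - b).toNat, b, ?_⟩
    push_cast
    rw [add_mul, mul_assoc, ← zpow_natCast (2:ℝ), ← zpow_add₀ (two_ne_zero), Int.toNat_of_nonneg (by omega)]
    ring_nf

lemma IsDyadic.neg {x : ℝ} (hx : IsDyadic x) : IsDyadic (-x) := by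
  rw [isDyadic_iff] at *; obtain ⟨k, a, rfl⟩ := hx; exact ⟨-k, a, by push_cast; ring⟩

lemma IsDyadic.sub {x y : ℝ} (hx : IsDyadic x) (hy : IsDyadic y) : IsDyadic (x - y) := by
  rw [sub_eq_add_neg]; exact hx.add hy.neg

lemma IsDyadic.zpow_mul {x : ℝ} (z : ℤ) (hx : IsDyadic x) : IsDyadic ((2:ℝ) ^ z * x) := by
  rw [isDyadic_iff] at *; obtain ⟨k, a, rfl⟩ := hx
  exact ⟨k, a + z, by rw [zpow_add₀ (two_ne_zero)]; ring⟩

lemma IsDyadic.affine {a b x : ℝ} (z : ℤ) (ha : IsDyadic a) (hb : IsDyadic b) (hx : IsDyadic x) :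
    IsDyadic (a + 2 ^ z * (x - b)) := ha.add ((hx.sub hb).zpow_mul z)

/-! ### Piecewise-linear partitions -/

/-- `f` is dyadic piecewise-linear with respect to the finite set `T` of breakpoints. -/
def PLP (f : ℝ ≃o ℝ) (T : Finset ℝ) : Prop :=
  T.Nonempty ∧ (∀ x ∈ T, IsDyadic x ∧ IsDyadic (f x)) ∧
  ∀ p ∈ T, ∀ q ∈ T, p < q → (∀ x ∈ T, x ≤ p ∨ q ≤ x) →
    ∃ z : ℤ, ∀ s ∈ Set.Icc p q, f s - f p = 2 ^ z * (s - p)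

namespace PLP

variable {f g : ℝ ≃o ℝ} {T U : Finset ℝ}

lemma nonempty (h : PLP f T) : T.Nonempty := h.1

/-- Find the consecutive pair of `T` around a `T`-free interval `[p,q]`. -/
lemma exists_consecutive (hT : T.Nonempty) {p q : ℝ}
    (hp : T.min' hT ≤ p) (hq : q ≤ T.max' hT) (hpq : p < q)
    (hgap : ∀ x ∈ T, ¬(p < x ∧ x < q)) :
    ∃ p' ∈ T, ∃ q' ∈ T, p' ≤ p ∧ q ≤ q' ∧ p' < q' ∧ ∀ x ∈ T, x ≤ p' ∨ q' ≤ x := by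
  have h1 : (T.filter (· ≤ p)).Nonempty := ⟨T.min' hT, Finset.mem_filter.2 ⟨T.min'_mem hT, hp⟩⟩
  have h2 : (T.filter (q ≤ ·)).Nonempty := ⟨T.max' hT, Finset.mem_filter.2 ⟨T.max'_mem hT, hq⟩⟩
  set p' := (T.filter (· ≤ p)).max' h1 with hp'
  set q' := (T.filter (q ≤ ·)).min' h2 with hq'
  have hp'm := (T.filter (· ≤ p)).max'_mem h1
  have hq'm := (T.filter (q ≤ ·)).min'_mem h2
  rw [Finset.mem_filter] at hp'm hq'm
  refine ⟨p', hp'm.1, q', hq'm.1, hp'm.2, hq'm.2, lt_of_le_of_lt hp'm.2 (lt_of_lt_of_le hpq hq'm.2), ?_⟩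
  intro x hx
  rcases le_or_gt x p with h | h
  · have : x ∈ T.filter (· ≤ p) := Finset.mem_filter.2 ⟨hx, h⟩
    exact Or.inl (Finset.le_max' _ _ this)
  · rcases le_or_gt q x with h' | h'
    · have : x ∈ T.filter (q ≤ ·) := Finset.mem_filter.2 ⟨hx, h'⟩
      exact Or.inr (Finset.min'_le _ _ this)
    · exact absurd ⟨h, h'⟩ (hgap x hx)

/-- Slope on any `T`-free subinterval of `[min T, max T]`. -/
lemma slope_of_gap (h : PLP f T) {p q : ℝ}
    (hp : T.min' h.nonempty ≤ p) (hq : q ≤ T.max' h.nonempty) (hpq : p < q)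
    (hgap : ∀ x ∈ T, ¬(p < x ∧ x < q)) :
    ∃ z : ℤ, ∀ s ∈ Set.Icc p q, f s - f p = 2 ^ z * (s - p) := by
  obtain ⟨p', hp'T, q', hq'T, hp', hq', hlt, hcons⟩ :=
    exists_consecutive h.nonempty hp hq hpq hgap
  obtain ⟨z, hz⟩ := h.2.2 p' hp'T q' hq'T hlt hcons
  refine ⟨z, fun s hs => ?_⟩
  have h1 := hz s ⟨le_trans hp' hs.1, le_trans hs.2 hq'⟩
  have h2 := hz p ⟨hp', le_trans hpq.le hq'⟩
  have h3 : f s - f p = (f s - f p') - (f p - f p') := by ring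
  rw [h3, h1, h2]; ring

/-- Values of a PLP map at dyadic points in range are dyadic, and conversely. -/
lemma dyadic_iff (h : PLP f T) {x : ℝ}
    (hx : x ∈ Set.Icc (T.min' h.nonempty) (T.max' h.nonempty)) :
    IsDyadic x ↔ IsDyadic (f x) := by
  by_cases hxT : x ∈ T
  · exact ⟨fun _ => (h.2.1 x hxT).2, fun _ => (h.2.1 x hxT).1⟩
  have h1 : (T.filter (· ≤ x)).Nonempty :=
    ⟨T.min' h.nonempty, Finset.mem_filter.2 ⟨T.min'_mem _, hx.1⟩⟩
  set p := (T.filter (· ≤ x)).max' h1 with hp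
  have hpm := (T.filter (· ≤ x)).max'_mem h1
  rw [Finset.mem_filter] at hpm
  have hpx : p < x := lt_of_le_of_ne hpm.2 (fun e => hxT (e ▸ hpm.1))
  have hgap : ∀ y ∈ T, ¬(p < y ∧ y < x) := by
    rintro y hy ⟨h1', h2'⟩
    have : y ∈ T.filter (· ≤ x) := Finset.mem_filter.2 ⟨hy, h2'.le⟩
    exact absurd (Finset.le_max' _ _ this) (not_le.2 h1')
  obtain ⟨z, hz⟩ := h.slope_of_gap (Finset.min'_le _ _ hpm.1) hx.2 hpx hgap
  have hval := hz x ⟨hpx.le, le_refl x⟩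
  obtain ⟨hpd, hfpd⟩ := h.2.1 p hpm.1
  have h2 : (2:ℝ)^z ≠ 0 := by positivity
  constructor
  · intro hxd
    have : f x = f p + 2 ^ z * (x - p) := by linarith
    rw [this]; exact hfpd.affine z hpd hxd
  · intro hfxd
    have : x = p + 2 ^ (-z) * (f x - f p) := by
      rw [hval, zpow_neg]
      field_simp
      rw [hp]; ring
    rw [this]; exact hpd.affine (-z) hfpd hfxd

lemma min'_eq {l : ℝ} (hne : T.Nonempty) (hl : l ∈ T) (h : ∀ x ∈ T, l ≤ x) :
    T.min' hne = l :=
  le_antisymm (Finset.min'_le _ _ hl) (Finset.le_min' _ _ _ h)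

lemma max'_eq {r : ℝ} (hne : T.Nonempty) (hr : r ∈ T) (h : ∀ x ∈ T, x ≤ r) :
    T.max' hne = r :=
  le_antisymm (Finset.max'_le _ _ _ h) (Finset.le_max' _ _ hr)

/-- Refining a partition by dyadic points within its range. -/
lemma refine (h : PLP f T) {S : Finset ℝ}
    (hS : ∀ x ∈ S, (T.min' h.nonempty ≤ x ∧ x ≤ T.max' h.nonempty) ∧ IsDyadic x) :
    PLP f (T ∪ S) := by
  have hmin := h.nonempty
  refine ⟨Finset.Nonempty.mono Finset.subset_union_left h.nonempty, ?_, ?_⟩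
  · intro x hx
    rcases Finset.mem_union.1 hx with hx | hx
    · exact h.2.1 x hx
    · exact ⟨(hS x hx).2, (h.dyadic_iff ⟨(hS x hx).1.1, (hS x hx).1.2⟩).1 (hS x hx).2⟩
  · intro p hp q hq hpq hcons
    have hmem : ∀ x ∈ T ∪ S, T.min' h.nonempty ≤ x ∧ x ≤ T.max' h.nonempty := by
      intro x hx
      rcases Finset.mem_union.1 hx with hx | hx
      · exact ⟨Finset.min'_le _ _ hx, Finset.le_max' _ _ hx⟩
      · exact (hS x hx).1
    exact h.slope_of_gap (hmem p hp).1 (hmem q hq).2 hpq (by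
      rintro x hx ⟨h1, h2⟩
      rcases hcons x (Finset.mem_union_left _ hx) with h' | h'
      · exact absurd h1 (not_lt.2 h')
      · exact absurd h2 (not_lt.2 h'))

/-- Composition of PLP maps. -/
lemma comp (hf : PLP f T) (hg : PLP g U)
    (h1 : U.min' hg.nonempty ≤ f (T.min' hf.nonempty))
    (h2 : f (T.max' hf.nonempty) ≤ U.max' hg.nonempty) :
    ∃ V : Finset ℝ, PLP (f.trans g) V ∧
      (T.min' hf.nonempty ∈ V ∧ ∀ x ∈ V, T.min' hf.nonempty ≤ x) ∧
      (T.max' hf.nonempty ∈ V ∧ ∀ x ∈ V, x ≤ T.max' hf.nonempty) := by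
  classical
  set l := T.min' hf.nonempty with hl
  set r := T.max' hf.nonempty with hr
  set S : Finset ℝ := (U.image f.symm).filter (fun x => l ≤ x ∧ x ≤ r) with hSdef
  set V := T ∪ S with hV
  have hlr : ∀ x ∈ V, l ≤ x ∧ x ≤ r := by
    intro x hx
    rcases Finset.mem_union.1 hx with hx | hx
    · exact ⟨Finset.min'_le _ _ hx, Finset.le_max' _ _ hx⟩
    · exact (Finset.mem_filter.1 hx).2
  have hfd : ∀ x ∈ V, IsDyadic x ∧ IsDyadic (f x) := by
    intro x hx
    rcases Finset.mem_union.1 hx with hx | hx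
    · exact hf.2.1 x hx
    · obtain ⟨hx2, hx3⟩ := Finset.mem_filter.1 hx
      obtain ⟨u, hu, rfl⟩ := Finset.mem_image.1 hx2
      have hfx : f (f.symm u) = u := f.apply_symm_apply u
      have hud : IsDyadic u := (hg.2.1 u hu).1
      refine ⟨(hf.dyadic_iff ⟨hx3.1, hx3.2⟩).2 (by rwa [hfx]), by rwa [hfx]⟩
  have hrange : ∀ x ∈ V, U.min' hg.nonempty ≤ f x ∧ f x ≤ U.max' hg.nonempty := by
    intro x hx
    exact ⟨le_trans h1 (f.monotone (hlr x hx).1), le_trans (f.monotone (hlr x hx).2) h2⟩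
  refine ⟨V, ⟨Finset.Nonempty.mono Finset.subset_union_left hf.nonempty, ?_, ?_⟩, 
    ⟨Finset.mem_union_left _ (Finset.min'_mem _ _), fun x hx => (hlr x hx).1⟩,
    ⟨Finset.mem_union_left _ (Finset.max'_mem _ _), fun x hx => (hlr x hx).2⟩⟩
  · intro x hx
    refine ⟨(hfd x hx).1, ?_⟩
    have : IsDyadic (f x) := (hfd x hx).2
    exact (hg.dyadic_iff ⟨(hrange x hx).1, (hrange x hx).2⟩).1 this
  · intro p hp q hq hpq hcons
    -- f-slope on [p, q]
    obtain ⟨z₁, hz₁⟩ := hf.slope_of_gap (hlr p hp).1 (hlr q hq).2 hpq (by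
      rintro x hx ⟨ha, hb⟩
      rcases hcons x (Finset.mem_union_left _ hx) with h' | h'
      · exact absurd ha (not_lt.2 h')
      · exact absurd hb (not_lt.2 h'))
    -- g-slope on [f p, f q]
    have hfpq : f p < f q := f.strictMono hpq
    obtain ⟨z₂, hz₂⟩ := hg.slope_of_gap (hrange p hp).1 (hrange q hq).2 hfpq (by
      rintro u hu ⟨ha, hb⟩
      have hx1 : p < f.symm u := by
        rw [← f.symm_apply_apply p]; exact f.symm.strictMono ha
      have hx2 : f.symm u < q := by
        rw [← f.symm_apply_apply q]; exact f.symm.strictMono hb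
      have hmem : f.symm u ∈ V := by
        refine Finset.mem_union_right _ (Finset.mem_filter.2 ⟨Finset.mem_image_of_mem _ hu, 
          le_trans (hlr p hp).1 hx1.le, le_trans hx2.le (hlr q hq).2⟩)
      rcases hcons _ hmem with h' | h'
      · exact absurd hx1 (not_lt.2 h')
      · exact absurd hx2 (not_lt.2 h'))
    refine ⟨z₂ + z₁, fun s hs => ?_⟩
    have hfs : f s ∈ Set.Icc (f p) (f q) := ⟨f.monotone hs.1, f.monotone hs.2⟩
    have e1 := hz₂ (f s) hfs
    have e2 := hz₁ s hs
    show g (f s) - g (f p) = _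
    rw [e1, e2, zpow_add₀ (two_ne_zero : (2:ℝ) ≠ 0)]
    ring

/-- The inverse of a PLP map is PLP with respect to the image partition. -/
lemma symm (h : PLP f T) : PLP f.symm (T.image f) := by
  classical
  refine ⟨h.nonempty.image f, ?_, ?_⟩
  · intro y hy
    obtain ⟨x, hx, rfl⟩ := Finset.mem_image.1 hy
    exact ⟨(h.2.1 x hx).2, by rw [f.symm_apply_apply]; exact (h.2.1 x hx).1⟩
  · intro p hp q hq hpq hcons
    obtain ⟨x₁, hx₁, rfl⟩ := Finset.mem_image.1 hp
    obtain ⟨x₂, hx₂, rfl⟩ := Finset.mem_image.1 hq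
    have hx12 : x₁ < x₂ := f.strictMono.lt_iff_lt.1 hpq
    obtain ⟨z, hz⟩ := h.2.2 x₁ hx₁ x₂ hx₂ hx12 (by
      intro x hx
      rcases hcons (f x) (Finset.mem_image_of_mem _ hx) with h' | h'
      · exact Or.inl (f.le_iff_le.1 h')
      · exact Or.inr (f.le_iff_le.1 h'))
    refine ⟨-z, fun s hs => ?_⟩
    have hxs : f.symm s ∈ Set.Icc x₁ x₂ := by
      constructor
      · rw [← f.symm_apply_apply x₁]; exact f.symm.monotone hs.1
      · rw [← f.symm_apply_apply x₂]; exact f.symm.monotone hs.2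
    have e := hz (f.symm s) hxs
    rw [f.apply_symm_apply] at e
    have h2 : (2:ℝ)^z ≠ 0 := by positivity
    rw [f.symm_apply_apply, zpow_neg]
    field_simp
    linarith

/-- Extend a partition to the left using a single affine piece. -/
lemma insertLeft (h : PLP f T) {L : ℝ} (hL : L < T.min' h.nonempty) (hLd : IsDyadic L)
    (hslope : ∃ z : ℤ, ∀ s ∈ Set.Icc L (T.min' h.nonempty), f s - f L = 2 ^ z * (s - L)) :
    PLP f (insert L T) := by
  classical
  set l := T.min' h.nonempty with hl
  obtain ⟨z, hz⟩ := hslope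
  have hfL : IsDyadic (f L) := by
    have e := hz l ⟨hL.le, le_refl l⟩
    have : f L = f l + 2 ^ z * (L - l) := by linarith
    rw [this]
    exact ((h.2.1 l (T.min'_mem _)).2).affine z ((h.2.1 l (T.min'_mem _)).1) hLd
  refine ⟨⟨L, Finset.mem_insert_self _ _⟩, ?_, ?_⟩
  · intro x hx
    rcases Finset.mem_insert.1 hx with rfl | hx
    · exact ⟨hLd, hfL⟩
    · exact h.2.1 x hx
  · intro p hp q hq hpq hcons
    rcases Finset.mem_insert.1 hp with rfl | hpT
    · -- p = L, q must be min T
      have hqT : q ∈ T := by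
        rcases Finset.mem_insert.1 hq with rfl | hq
        · exact absurd hpq (lt_irrefl _)
        · exact hq
      have hql : q = l := by
        refine le_antisymm ?_ (Finset.min'_le _ _ hqT)
        rcases hcons l (Finset.mem_insert_of_mem (T.min'_mem _)) with h' | h'
        · exact absurd (lt_of_le_of_lt h' hL) (lt_irrefl _)
        · exact h'
      subst hql
      exact ⟨z, fun s hs => hz s hs⟩
    · have hqT : q ∈ T := by
        rcases Finset.mem_insert.1 hq with rfl | hq
        · exact absurd (lt_trans (lt_of_lt_of_le hL (Finset.min'_le _ _ hpT)) hpq) (lt_irrefl _)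
        · exact hq
      exact h.2.2 p hpT q hqT hpq (fun x hx => hcons x (Finset.mem_insert_of_mem hx))

/-- Extend a partition to the right using a single affine piece. -/
lemma insertRight (h : PLP f T) {R : ℝ} (hR : T.max' h.nonempty < R) (hRd : IsDyadic R)
    (hslope : ∃ z : ℤ, ∀ s ∈ Set.Icc (T.max' h.nonempty) R,
      f s - f (T.max' h.nonempty) = 2 ^ z * (s - T.max' h.nonempty)) :
    PLP f (insert R T) := by
  classical
  set r := T.max' h.nonempty with hr
  obtain ⟨z, hz⟩ := hslope
  have hfR : IsDyadic (f R) := by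
    have e := hz R ⟨hR.le, le_refl R⟩
    have : f R = f r + 2 ^ z * (R - r) := by linarith
    rw [this]
    exact ((h.2.1 r (T.max'_mem _)).2).affine z ((h.2.1 r (T.max'_mem _)).1) hRd
  refine ⟨⟨R, Finset.mem_insert_self _ _⟩, ?_, ?_⟩
  · intro x hx
    rcases Finset.mem_insert.1 hx with rfl | hx
    · exact ⟨hRd, hfR⟩
    · exact h.2.1 x hx
  · intro p hp q hq hpq hcons
    rcases Finset.mem_insert.1 hq with rfl | hqT
    · -- q = R, p must be max T
      have hpT : p ∈ T := by
        rcases Finset.mem_insert.1 hp with rfl | hp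
        · exact absurd hpq (lt_irrefl _)
        · exact hp
      have hpr : p = r := by
        refine le_antisymm (Finset.le_max' _ _ hpT) ?_
        rcases hcons r (Finset.mem_insert_of_mem (T.max'_mem _)) with h' | h'
        · exact h'
        · exact absurd (lt_of_lt_of_le hR h') (lt_irrefl _)
      subst hpr
      exact ⟨z, fun s hs => hz s hs⟩
    · have hpT : p ∈ T := by
        rcases Finset.mem_insert.1 hp with rfl | hp
        · exact absurd (lt_trans hpq (lt_of_le_of_lt (Finset.le_max' _ _ hqT) hR)) (lt_irrefl _)
        · exact hp
      exact h.2.2 p hpT q hqT hpq (fun x hx => hcons x (Finset.mem_insert_of_mem hx))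

end PLP

/-! ### PL₂(ℝ) via PLP -/

lemma IsDyadic.min {x y : ℝ} (hx : IsDyadic x) (hy : IsDyadic y) : IsDyadic (min x y) := by
  rcases le_total x y with h | h
  · rwa [min_eq_left h]
  · rwa [min_eq_right h]

lemma IsDyadic.max {x y : ℝ} (hx : IsDyadic x) (hy : IsDyadic y) : IsDyadic (max x y) := by
  rcases le_total x y with h | h
  · rwa [max_eq_right h]
  · rwa [max_eq_left h]

def PL2Rp (f : ℝ ≃o ℝ) : Prop :=
  ∃ (T : Finset ℝ) (hT : PLP f T) (a b : ℤ),
    (∀ s ≤ T.min' hT.nonempty, f s = s - a) ∧ (∀ s, T.max' hT.nonempty ≤ s → f s = s - b)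

lemma pl2Rp_one : PL2Rp 1 := by
  refine ⟨{0}, ⟨⟨0, Finset.mem_singleton_self 0⟩, ?_, ?_⟩, 0, 0, ?_, ?_⟩
  · intro x hx
    rw [Finset.mem_singleton] at hx
    subst hx
    exact ⟨IsDyadic.zero, IsDyadic.zero⟩
  · intro p hp q hq hpq _
    rw [Finset.mem_singleton] at hp hq
    exact absurd (hq ▸ hp ▸ hpq) (lt_irrefl _)
  · intro s _; simp
  · intro s _; simp

lemma pl2Rp_mul {f g : ℝ ≃o ℝ} (hf : PL2Rp f) (hg : PL2Rp g) : PL2Rp (f * g) := by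
  classical
  obtain ⟨T, hT, a, b, hta, htb⟩ := hg
  obtain ⟨U, hU, a', b', hua, hub⟩ := hf
  set L : ℝ := Min.min (T.min' hT.nonempty) (U.min' hU.nonempty + a) - 1 with hL
  set R : ℝ := Max.max (T.max' hT.nonempty) (U.max' hU.nonempty + b) + 1 with hR
  have hLd : IsDyadic L := (((hT.2.1 _ (T.min'_mem _)).1).min
    (((hU.2.1 _ (U.min'_mem _)).1).add (IsDyadic.intCast a))).sub IsDyadic.one
  have hRd : IsDyadic R := (((hT.2.1 _ (T.max'_mem _)).1).max
    (((hU.2.1 _ (U.max'_mem _)).1).add (IsDyadic.intCast b))).add IsDyadic.one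
  have hLlt : L < T.min' hT.nonempty := by
    have := min_le_left (T.min' hT.nonempty) (U.min' hU.nonempty + a); linarith
  -- extend T on the left
  have hT2 : PLP g (insert L T) := hT.insertLeft hLlt hLd ⟨0, by
    intro s hs
    rw [hta s hs.2, hta L hLlt.le]
    simp⟩
  have hT2min : (insert L T).min' ⟨L, Finset.mem_insert_self _ _⟩ = L :=
    PLP.min'_eq _ (Finset.mem_insert_self _ _) (by
      intro x hx
      rcases Finset.mem_insert.1 hx with rfl | hx
      · exact le_refl _
      · exact le_trans hLlt.le (Finset.min'_le _ _ hx))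
  have hT2max : (insert L T).max' ⟨L, Finset.mem_insert_self _ _⟩ = T.max' hT.nonempty :=
    PLP.max'_eq _ (Finset.mem_insert_of_mem (T.max'_mem _)) (by
      intro x hx
      rcases Finset.mem_insert.1 hx with rfl | hx
      · exact le_trans hLlt.le (le_trans (Finset.min'_le _ _ (T.max'_mem hT.nonempty))
          (le_refl _))
      · exact Finset.le_max' _ _ hx)
  have hRlt : (insert L T).max' hT2.nonempty < R := by
    rw [hT2max]
    have := le_max_left (T.max' hT.nonempty) (U.max' hU.nonempty + b); linarith
  have hT3 : PLP g (insert R (insert L T)) := hT2.insertRight hRlt hRd ⟨0, by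
    intro s hs
    rw [hT2max] at hs
    rw [htb s hs.1, hT2max, htb _ (le_refl _)]
    simp⟩
  have hRmem : R ∈ insert R (insert L T) := Finset.mem_insert_self _ _
  have hLmem : L ∈ insert R (insert L T) := Finset.mem_insert_of_mem (Finset.mem_insert_self _ _)
  have hbound : ∀ x ∈ insert R (insert L T), L ≤ x ∧ x ≤ R := by
    intro x hx
    rcases Finset.mem_insert.1 hx with rfl | hx
    · refine ⟨?_, le_refl _⟩
      have h2 : T.min' hT.nonempty ≤ T.max' hT.nonempty := Finset.min'_le _ _ (T.max'_mem _)
      have h3 : T.max' hT.nonempty < R := hT2max ▸ hRlt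
      linarith
    · rcases Finset.mem_insert.1 hx with rfl | hx
      · constructor
        · exact le_refl _
        · have h1 : L < T.min' hT.nonempty := hLlt
          have h2 : T.min' hT.nonempty ≤ T.max' hT.nonempty :=
            Finset.min'_le _ _ (T.max'_mem _)
          have h3 : T.max' hT.nonempty < R := hT2max ▸ hRlt
          linarith
      · constructor
        · exact le_trans hLlt.le (Finset.min'_le _ _ hx)
        · exact le_trans (Finset.le_max' _ _ hx) (hT2max ▸ hRlt).le
  have hT3min : (insert R (insert L T)).min' hT3.nonempty = L :=
    PLP.min'_eq _ hLmem (fun x hx => (hbound x hx).1)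
  have hT3max : (insert R (insert L T)).max' hT3.nonempty = R :=
    PLP.max'_eq _ hRmem (fun x hx => (hbound x hx).2)
  -- extend U on both sides
  have hgL : g L = L - a := hta L hLlt.le
  have hgR : g R = R - b := htb R (hT2max ▸ hRlt).le
  have hLa : L - a - 1 < U.min' hU.nonempty := by
    have := min_le_right (T.min' hT.nonempty) (U.min' hU.nonempty + a)
    rw [hL]; push_cast; linarith
  have hRb : U.max' hU.nonempty < R - b + 1 := by
    have := le_max_right (T.max' hT.nonempty) (U.max' hU.nonempty + b)
    rw [hR]; push_cast; linarith
  have hU2 : PLP f (insert (L - a - 1) U) := hU.insertLeft hLa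
    ((hLd.sub (IsDyadic.intCast a)).sub IsDyadic.one) ⟨0, by
      intro s hs
      rw [hua s hs.2, hua _ hLa.le]
      simp⟩
  have hU2min : (insert (L - a - 1) U).min' hU2.nonempty = L - a - 1 :=
    PLP.min'_eq _ (Finset.mem_insert_self _ _) (by
      intro x hx
      rcases Finset.mem_insert.1 hx with rfl | hx
      · exact le_refl _
      · exact le_trans hLa.le (Finset.min'_le _ _ hx))
  have hU2max : (insert (L - a - 1) U).max' hU2.nonempty = U.max' hU.nonempty :=
    PLP.max'_eq _ (Finset.mem_insert_of_mem (U.max'_mem _)) (by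
      intro x hx
      rcases Finset.mem_insert.1 hx with rfl | hx
      · exact le_trans hLa.le (Finset.min'_le _ _ (U.max'_mem hU.nonempty))
      · exact Finset.le_max' _ _ hx)
  have hU3 : PLP f (insert (R - b + 1) (insert (L - a - 1) U)) := hU2.insertRight
    (by rw [hU2max]; exact hRb) ((hRd.sub (IsDyadic.intCast b)).add IsDyadic.one) ⟨0, by
      intro s hs
      rw [hU2max] at hs
      rw [hub s hs.1, hU2max, hub _ (le_refl _)]
      simp⟩
  have hU3min : (insert (R - b + 1) (insert (L - a - 1) U)).min' hU3.nonempty = L - a - 1 :=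
    PLP.min'_eq _ (Finset.mem_insert_of_mem (Finset.mem_insert_self _ _)) (by
      intro x hx
      have h2 : U.min' hU.nonempty ≤ U.max' hU.nonempty := Finset.min'_le _ _ (U.max'_mem _)
      rcases Finset.mem_insert.1 hx with rfl | hx
      · linarith
      · rcases Finset.mem_insert.1 hx with rfl | hx
        · exact le_refl _
        · exact le_trans hLa.le (Finset.min'_le _ _ hx))
  have hU3max : (insert (R - b + 1) (insert (L - a - 1) U)).max' hU3.nonempty = R - b + 1 :=
    PLP.max'_eq _ (Finset.mem_insert_self _ _) (by
      intro x hx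
      have h2 : U.min' hU.nonempty ≤ U.max' hU.nonempty := Finset.min'_le _ _ (U.max'_mem _)
      rcases Finset.mem_insert.1 hx with rfl | hx
      · exact le_refl _
      · rcases Finset.mem_insert.1 hx with rfl | hx
        · linarith
        · exact le_trans (Finset.le_max' _ _ hx) hRb.le)
  -- apply composition
  obtain ⟨V, hV, hVmin, hVmax⟩ := hT3.comp hU3
    (by rw [hT3min, hgL, hU3min]; linarith)
    (by rw [hT3max, hgR, hU3max]; linarith)
  rw [hT3min] at hVmin
  rw [hT3max] at hVmax
  have hVmin' : V.min' hV.nonempty = L := PLP.min'_eq _ hVmin.1 hVmin.2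
  have hVmax' : V.max' hV.nonempty = R := PLP.max'_eq _ hVmax.1 hVmax.2
  have hmulV : PLP (f * g) V := hV
  refine ⟨V, hmulV, a + a', b + b', ?_, ?_⟩
  · intro s hs
    rw [hVmin'] at hs
    have h1 : g s = s - a := hta s (le_trans hs hLlt.le)
    have h2 : f (g s) = g s - a' := by
      apply hua
      rw [h1]
      have := min_le_right (T.min' hT.nonempty) (U.min' hU.nonempty + a)
      have : s - a ≤ U.min' hU.nonempty := by
        have h3 : s ≤ L := hs; rw [hL] at h3; linarith
      linarith
    show f (g s) = _
    rw [h2, h1]; push_cast; ring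
  · intro s hs
    rw [hVmax'] at hs
    have h0 : T.max' hT.nonempty ≤ s := le_trans (hT2max ▸ hRlt).le hs
    have h1 : g s = s - b := htb s h0
    have h2 : f (g s) = g s - b' := by
      apply hub
      rw [h1]
      have h3 : R ≤ s := hs
      have := le_max_right (T.max' hT.nonempty) (U.max' hU.nonempty + b)
      rw [hR] at h3
      linarith
    show f (g s) = _
    rw [h2, h1]; push_cast; ring

lemma pl2Rp_inv {f : ℝ ≃o ℝ} (hf : PL2Rp f) : PL2Rp f⁻¹ := by
  classical
  obtain ⟨T, hT, a, b, hta, htb⟩ := hf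
  have hsymm : PLP f.symm (T.image f) := hT.symm
  have hmin : (T.image f).min' hsymm.nonempty = f (T.min' hT.nonempty) :=
    PLP.min'_eq _ (Finset.mem_image_of_mem _ (T.min'_mem _)) (by
      intro x hx
      obtain ⟨y, hy, rfl⟩ := Finset.mem_image.1 hx
      exact f.monotone (Finset.min'_le _ _ hy))
  have hmax : (T.image f).max' hsymm.nonempty = f (T.max' hT.nonempty) :=
    PLP.max'_eq _ (Finset.mem_image_of_mem _ (T.max'_mem _)) (by
      intro x hx
      obtain ⟨y, hy, rfl⟩ := Finset.mem_image.1 hx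
      exact f.monotone (Finset.le_max' _ _ hy))
  refine ⟨T.image f, hsymm, -a, -b, ?_, ?_⟩
  · intro s hs
    rw [hmin] at hs
    have hx : f.symm s ≤ T.min' hT.nonempty := by
      rw [← f.symm_apply_apply (T.min' hT.nonempty)]; exact f.symm.monotone hs
    have := hta (f.symm s) hx
    have h2 : s = f.symm s - a := by rw [← this, f.apply_symm_apply]
    show f.symm s = _
    push_cast
    linarith
  · intro s hs
    rw [hmax] at hs
    have hx : T.max' hT.nonempty ≤ f.symm s := by
      rw [← f.symm_apply_apply (T.max' hT.nonempty)]; exact f.symm.monotone hs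
    have := htb (f.symm s) hx
    have h2 : s = f.symm s - b := by rw [← this, f.apply_symm_apply]
    show f.symm s = _
    push_cast
    linarith

/-! ### Extending order isomorphisms of [0,1] to ℝ -/

abbrev II := Set.Icc (0:ℝ) 1

noncomputable def extFun (f : II ≃o II) : ℝ → ℝ :=
  fun x => if h : x ∈ Set.Icc (0:ℝ) 1 then (f ⟨x, h⟩ : ℝ) else x

lemma extFun_of_mem (f : II ≃o II) {x : ℝ} (h : x ∈ Set.Icc (0:ℝ) 1) :
    extFun f x = (f ⟨x, h⟩ : ℝ) := dif_pos h

lemma extFun_of_not_mem (f : II ≃o II) {x : ℝ} (h : x ∉ Set.Icc (0:ℝ) 1) :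
    extFun f x = x := dif_neg h

lemma extFun_monotone (f : II ≃o II) : Monotone (extFun f) := by
  intro x y hxy
  by_cases hx : x ∈ Set.Icc (0:ℝ) 1 <;> by_cases hy : y ∈ Set.Icc (0:ℝ) 1
  · rw [extFun_of_mem f hx, extFun_of_mem f hy]
    exact_mod_cast f.monotone (Subtype.mk_le_mk.2 hxy)
  · rw [extFun_of_mem f hx, extFun_of_not_mem f hy]
    have h1 : (1:ℝ) < y := by
      rcases not_and_or.1 hy with h | h
      · exact absurd (le_trans hx.1 hxy) h
      · exact not_le.1 h
    exact le_trans (f ⟨x, hx⟩).2.2 h1.le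
  · rw [extFun_of_not_mem f hx, extFun_of_mem f hy]
    have h1 : x < 0 := by
      rcases not_and_or.1 hx with h | h
      · exact not_le.1 h
      · exact absurd (le_trans hxy hy.2) h
    exact le_trans h1.le (f ⟨y, hy⟩).2.1
  · rw [extFun_of_not_mem f hx, extFun_of_not_mem f hy]
    exact hxy

lemma extFun_leftInv (f : II ≃o II) (x : ℝ) : extFun f.symm (extFun f x) = x := by
  by_cases hx : x ∈ Set.Icc (0:ℝ) 1
  · rw [extFun_of_mem f hx, extFun_of_mem f.symm (f ⟨x, hx⟩).2]
    have : (⟨(f ⟨x, hx⟩ : ℝ), (f ⟨x, hx⟩).2⟩ : II) = f ⟨x, hx⟩ := Subtype.ext rfl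
    rw [this, f.symm_apply_apply]
  · rw [extFun_of_not_mem f hx, extFun_of_not_mem f.symm hx]

noncomputable def extIcc (f : II ≃o II) : ℝ ≃o ℝ where
  toFun := extFun f
  invFun := extFun f.symm
  left_inv := extFun_leftInv f
  right_inv := by
    have := extFun_leftInv f.symm
    exact fun x => by simpa using this x
  map_rel_iff' := by
    intro x y
    constructor
    · intro h
      have := extFun_monotone f.symm h
      have e1 := extFun_leftInv f x
      have e2 := extFun_leftInv f y
      change extFun f.symm (extFun f x) ≤ extFun f.symm (extFun f y) at this
      rwa [e1, e2] at this
    · intro h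
      exact extFun_monotone f h

lemma extIcc_apply (f : II ≃o II) (x : ℝ) : extIcc f x = extFun f x := rfl

lemma extIcc_symm (f : II ≃o II) : (extIcc f).symm = extIcc f.symm := rfl

/-- Order isomorphisms of `[0,1]` fix the endpoints. -/
lemma fix_zero (f : II ≃o II) : (f ⟨0, by norm_num⟩ : ℝ) = 0 := by
  refine le_antisymm ?_ (f _).2.1
  have h1 : (⟨0, by norm_num⟩ : II) ≤ f.symm ⟨0, by norm_num⟩ := (f.symm _).2.1
  have := f.monotone h1
  rw [f.apply_symm_apply] at this
  exact_mod_cast this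

lemma fix_one (f : II ≃o II) : (f ⟨1, by norm_num⟩ : ℝ) = 1 := by
  refine le_antisymm (f _).2.2 ?_
  have h1 : f.symm ⟨1, by norm_num⟩ ≤ ⟨1, by norm_num⟩ := (f.symm _).2.2
  have := f.monotone h1
  rw [f.apply_symm_apply] at this
  exact_mod_cast this

lemma extFun_zero (f : II ≃o II) : extFun f 0 = 0 := by
  rw [extFun_of_mem f (by norm_num)]
  exact fix_zero f

lemma extFun_one (f : II ≃o II) : extFun f 1 = 1 := by
  rw [extFun_of_mem f (by norm_num)]
  exact fix_one f

lemma extIcc_mul (f g : II ≃o II) : extIcc (f * g) = (extIcc g).trans (extIcc f) := by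
  apply OrderIso.ext
  funext x
  show extFun (f * g) x = extFun f (extFun g x)
  by_cases hx : x ∈ Set.Icc (0:ℝ) 1
  · rw [extFun_of_mem _ hx, extFun_of_mem g hx, extFun_of_mem f (g ⟨x, hx⟩).2]
    show ((f (g ⟨x, hx⟩)) : ℝ) = ((f ⟨(g ⟨x, hx⟩ : ℝ), _⟩) : ℝ)
    norm_cast
  · rw [extFun_of_not_mem _ hx, extFun_of_not_mem g hx, extFun_of_not_mem f hx]

lemma extIcc_inv (f : II ≃o II) : extIcc f⁻¹ = (extIcc f).symm := rfl

/-! ### PL₂(I) via PLP -/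

def PL2Ip (f : II ≃o II) : Prop :=
  ∃ (T : Finset ℝ) (hT : PLP (extIcc f) T),
    T.min' hT.nonempty = 0 ∧ T.max' hT.nonempty = 1

lemma isPL2I_iff_pl2Ip {f : II ≃o II} : IsPL2I f ↔ PL2Ip f := by
  classical
  constructor
  · rintro ⟨m, t, z, h0, h1, hmono, hdy, hslope⟩
    set T : Finset ℝ := Finset.image t Finset.univ with hT
    have hmem : ∀ i, t i ∈ T := fun i => Finset.mem_image_of_mem t (Finset.mem_univ i)
    have hne : T.Nonempty := ⟨t 0, hmem 0⟩
    have hrange : ∀ i, t i ∈ Set.Icc (0:ℝ) 1 := by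
      intro i
      exact ⟨h0 ▸ hmono.monotone (Fin.zero_le i), h1 ▸ hmono.monotone (Fin.le_last i)⟩
    -- values at partition points are dyadic, by induction along the partition
    have hval : ∀ i, IsDyadic (extFun f (t i)) := by
      intro i
      induction i using Fin.induction with
      | zero => rw [h0, extFun_zero]; exact IsDyadic.zero
      | succ i ih =>
        have hu := hrange i.succ
        have hv := hrange i.castSucc
        have hd := hslope i ⟨t i.succ, hu⟩ ⟨t i.castSucc, hv⟩
          ⟨(hmono (Fin.castSucc_lt_succ (i := i))).le, le_refl _⟩
          ⟨le_refl _, (hmono (Fin.castSucc_lt_succ (i := i))).le⟩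
        rw [extFun_of_mem f hu]
        rw [extFun_of_mem f hv] at ih
        have : (f ⟨t i.succ, hu⟩ : ℝ) =
            (f ⟨t i.castSucc, hv⟩ : ℝ) + 2 ^ (z i) * (t i.succ - t i.castSucc) := by
          linarith
        rw [this]
        exact ih.affine _ (hdy i.castSucc) (hdy i.succ)
    have hPLP : PLP (extIcc f) T := by
      refine ⟨hne, ?_, ?_⟩
      · intro x hx
        obtain ⟨i, _, rfl⟩ := Finset.mem_image.1 hx
        exact ⟨hdy i, hval i⟩
      · intro p hp q hq hpq hcons
        obtain ⟨i, _, rfl⟩ := Finset.mem_image.1 hp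
        obtain ⟨j, _, rfl⟩ := Finset.mem_image.1 hq
        have hij : i < j := hmono.lt_iff_lt.1 hpq
        have hj : (j : ℕ) = (i : ℕ) + 1 := by
          by_contra hne'
          have hij' : (i : ℕ) < (j : ℕ) := hij
          have hkm : (i : ℕ) + 1 < m + 1 := by omega
          set k : Fin (m+1) := ⟨(i:ℕ)+1, hkm⟩ with hk
          have hik : i < k := by rw [Fin.lt_def]; simp [hk]
          have hkj : k < j := by rw [Fin.lt_def]; simp [hk]; omega
          rcases hcons (t k) (hmem k) with h' | h'
          · exact absurd (hmono hik) (not_lt.2 h')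
          · exact absurd (hmono hkj) (not_lt.2 h')
        have him : (i : ℕ) < m := by omega
        set i' : Fin m := ⟨i, him⟩ with hi'
        have hcast : i'.castSucc = i := Fin.ext rfl
        have hsucc : i'.succ = j := Fin.ext (by simp [hj, hi'])
        refine ⟨z i', fun s hs => ?_⟩
        have hsmem : s ∈ Set.Icc (0:ℝ) 1 :=
          ⟨le_trans (hrange i).1 hs.1, le_trans hs.2 (hrange j).2⟩
        have hd := hslope i' ⟨s, hsmem⟩ ⟨t i, hrange i⟩
          (by rw [hcast, hsucc]; exact hs)
          (by rw [hcast, hsucc]; exact ⟨le_refl _, (hmono hij).le⟩)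
        rw [extIcc_apply, extIcc_apply, extFun_of_mem f hsmem, extFun_of_mem f (hrange i)]
        simpa using hd
    refine ⟨T, hPLP, ?_, ?_⟩
    · rw [PLP.min'_eq _ (hmem 0) (by
        intro x hx
        obtain ⟨i, _, rfl⟩ := Finset.mem_image.1 hx
        exact hmono.monotone (Fin.zero_le i))]
      exact h0
    · rw [PLP.max'_eq _ (hmem (Fin.last m)) (by
        intro x hx
        obtain ⟨i, _, rfl⟩ := Finset.mem_image.1 hx
        exact hmono.monotone (Fin.le_last i))]
      exact h1
  · rintro ⟨T, hT, hmin, hmax⟩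
    set m : ℕ := T.card - 1 with hm
    have hcard : T.card = m + 1 := by
      have := Finset.card_pos.2 hT.nonempty
      omega
    set e := T.orderIsoOfFin hcard with he
    set t : Fin (m + 1) → ℝ := fun i => (e i : ℝ) with ht
    have hmono : StrictMono t := fun i j h => by exact_mod_cast e.strictMono h
    have htmem : ∀ i, t i ∈ T := fun i => (e i).2
    have ht0 : t 0 = 0 := by
      rw [← hmin]
      refine le_antisymm ?_ (Finset.min'_le _ _ (htmem 0))
      apply Finset.le_min'
      intro y hy
      have h2 := e.monotone (Fin.zero_le (e.symm ⟨y, hy⟩))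
      rw [OrderIso.apply_symm_apply] at h2
      exact_mod_cast h2
    have htlast : t (Fin.last m) = 1 := by
      rw [← hmax]
      refine le_antisymm (Finset.le_max' _ _ (htmem _)) ?_
      apply Finset.max'_le
      intro y hy
      have h2 := e.monotone (Fin.le_last (e.symm ⟨y, hy⟩))
      rw [OrderIso.apply_symm_apply] at h2
      exact_mod_cast h2
    have hrange : ∀ i, t i ∈ Set.Icc (0:ℝ) 1 := by
      intro i
      exact ⟨ht0 ▸ hmono.monotone (Fin.zero_le i), htlast ▸ hmono.monotone (Fin.le_last i)⟩
    have hslope : ∀ i : Fin m, ∃ zz : ℤ, ∀ s ∈ Set.Icc (t i.castSucc) (t i.succ),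
        extIcc f s - extIcc f (t i.castSucc) = 2 ^ zz * (s - t i.castSucc) := by
      intro i
      refine hT.2.2 _ (htmem _) _ (htmem _) (hmono (Fin.castSucc_lt_succ (i := i))) ?_
      intro x hx
      rcases le_or_gt (e.symm ⟨x, hx⟩) i.castSucc with h' | h'
      · left
        have := e.monotone h'
        rw [OrderIso.apply_symm_apply] at this
        exact_mod_cast this
      · right
        have h'' : i.succ ≤ e.symm ⟨x, hx⟩ := by rwa [← Fin.castSucc_lt_iff_succ_le]
        have := e.monotone h''
        rw [OrderIso.apply_symm_apply] at this
        exact_mod_cast this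
    choose zz hzz using hslope
    refine ⟨m, t, zz, ht0, htlast, hmono, fun i => (hT.2.1 _ (htmem i)).1, ?_⟩
    intro i u v hu hv
    have hui : (u : ℝ) ∈ Set.Icc (0:ℝ) 1 := u.2
    have hvi : (v : ℝ) ∈ Set.Icc (0:ℝ) 1 := v.2
    have e1 := hzz i (u : ℝ) hu
    have e2 := hzz i (v : ℝ) hv
    rw [extIcc_apply, extFun_of_mem f hui] at e1
    rw [extIcc_apply, extFun_of_mem f hvi] at e2
    have hu' : (⟨(u:ℝ), hui⟩ : II) = u := Subtype.ext rfl
    have hv' : (⟨(v:ℝ), hvi⟩ : II) = v := Subtype.ext rfl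
    rw [hu'] at e1
    rw [hv'] at e2
    linarith

lemma pl2Ip_one : PL2Ip 1 := by
  classical
  have hext : ∀ x : ℝ, extFun (1 : II ≃o II) x = x := by
    intro x
    by_cases hx : x ∈ Set.Icc (0:ℝ) 1
    · rw [extFun_of_mem _ hx]; rfl
    · rw [extFun_of_not_mem _ hx]
  have hne : ({0, 1} : Finset ℝ).Nonempty := ⟨0, by simp⟩
  have hPLP : PLP (extIcc (1 : II ≃o II)) ({0, 1} : Finset ℝ) := by
    refine ⟨hne, ?_, ?_⟩
    · intro x hx
      rw [extIcc_apply, hext]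
      rcases Finset.mem_insert.1 hx with rfl | hx
      · exact ⟨IsDyadic.zero, IsDyadic.zero⟩
      · rw [Finset.mem_singleton] at hx; subst hx
        exact ⟨IsDyadic.one, IsDyadic.one⟩
    · intro p hp q hq hpq _
      refine ⟨0, fun s hs => ?_⟩
      rw [extIcc_apply, extIcc_apply, hext, hext]
      simp
  refine ⟨{0, 1}, hPLP, ?_, ?_⟩
  · apply PLP.min'_eq _ (by simp)
    intro x hx
    rcases Finset.mem_insert.1 hx with rfl | hx
    · exact le_refl _
    · rw [Finset.mem_singleton] at hx; subst hx; norm_num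
  · apply PLP.max'_eq _ (by simp)
    intro x hx
    rcases Finset.mem_insert.1 hx with rfl | hx
    · norm_num
    · rw [Finset.mem_singleton] at hx; subst hx; exact le_refl _

lemma pl2Ip_mul {f g : II ≃o II} (hf : PL2Ip f) (hg : PL2Ip g) : PL2Ip (f * g) := by
  classical
  obtain ⟨T, hT, hTmin, hTmax⟩ := hg
  obtain ⟨U, hU, hUmin, hUmax⟩ := hf
  have h1 : U.min' hU.nonempty ≤ extIcc g (T.min' hT.nonempty) := by
    rw [hUmin, hTmin, extIcc_apply, extFun_zero]
  have h2 : extIcc g (T.max' hT.nonempty) ≤ U.max' hU.nonempty := by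
    rw [hUmax, hTmax, extIcc_apply, extFun_one]
  obtain ⟨V, hV, hVmin, hVmax⟩ := hT.comp hU h1 h2
  rw [hTmin] at hVmin
  rw [hTmax] at hVmax
  have hV' : PLP (extIcc (f * g)) V := by rwa [extIcc_mul f g]
  exact ⟨V, hV', PLP.min'_eq _ hVmin.1 hVmin.2, PLP.max'_eq _ hVmax.1 hVmax.2⟩

lemma pl2Ip_inv {f : II ≃o II} (hf : PL2Ip f) : PL2Ip f⁻¹ := by
  classical
  obtain ⟨T, hT, hTmin, hTmax⟩ := hf
  have hsymm : PLP (extIcc f).symm (T.image (extIcc f)) := hT.symm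
  have hsymm' : PLP (extIcc f⁻¹) (T.image (extIcc f)) := by rwa [extIcc_inv]
  refine ⟨T.image (extIcc f), hsymm', ?_, ?_⟩
  · apply PLP.min'_eq _ (Finset.mem_image.2 ⟨T.min' hT.nonempty, T.min'_mem _, by
      rw [hTmin, extIcc_apply, extFun_zero]⟩)
    intro x hx
    obtain ⟨y, hy, rfl⟩ := Finset.mem_image.1 hx
    calc (0:ℝ) = extIcc f (T.min' hT.nonempty) := by rw [hTmin, extIcc_apply, extFun_zero]
    _ ≤ extIcc f y := (extIcc f).monotone (Finset.min'_le _ _ hy)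
  · apply PLP.max'_eq _ (Finset.mem_image.2 ⟨T.max' hT.nonempty, T.max'_mem _, by
      rw [hTmax, extIcc_apply, extFun_one]⟩)
    intro x hx
    obtain ⟨y, hy, rfl⟩ := Finset.mem_image.1 hx
    calc extIcc f y ≤ extIcc f (T.max' hT.nonempty) := (extIcc f).monotone (Finset.le_max' _ _ hy)
    _ = 1 := by rw [hTmax, extIcc_apply, extFun_one]

/-! ### The PL homeomorphism φ : ℝ → (0,1) -/

noncomputable def phiA (x : ℝ) : ℝ := 2 ^ (⌊x⌋ - 1 : ℤ) * (x - ⌊x⌋ + 1)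

lemma phiA_add_int (x : ℝ) (c : ℤ) : phiA (x + c) = 2 ^ c * phiA x := by
  unfold phiA
  rw [Int.floor_add_intCast]
  push_cast
  rw [zpow_sub₀ (two_ne_zero : (2:ℝ) ≠ 0), zpow_sub₀ (two_ne_zero : (2:ℝ) ≠ 0),
    zpow_add₀ (two_ne_zero : (2:ℝ) ≠ 0)]
  ring

lemma phiA_int (n : ℤ) : phiA n = 2 ^ (n - 1 : ℤ) := by
  unfold phiA
  rw [Int.floor_intCast]
  ring

lemma phiA_pos (x : ℝ) : 0 < phiA x := by
  unfold phiA
  have h1 : (⌊x⌋ : ℝ) ≤ x := Int.floor_le x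
  have h2 : (0:ℝ) < 2 ^ (⌊x⌋ - 1 : ℤ) := by positivity
  nlinarith

lemma phiA_lt (x : ℝ) : phiA x < 2 ^ (⌊x⌋ : ℤ) := by
  unfold phiA
  have h1 : x < ⌊x⌋ + 1 := Int.lt_floor_add_one x
  have h2 : (0:ℝ) < 2 ^ (⌊x⌋ - 1 : ℤ) := by positivity
  have h3 : (2:ℝ) ^ (⌊x⌋ : ℤ) = 2 ^ (⌊x⌋ - 1 : ℤ) * 2 := by
    rw [← zpow_add_one₀ (two_ne_zero : (2:ℝ) ≠ 0)]
    norm_num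
  rw [h3]
  nlinarith

lemma phiA_ge (x : ℝ) : 2 ^ (⌊x⌋ - 1 : ℤ) ≤ phiA x := by
  unfold phiA
  have h1 : (⌊x⌋ : ℝ) ≤ x := Int.floor_le x
  have h2 : (0:ℝ) < 2 ^ (⌊x⌋ - 1 : ℤ) := by positivity
  nlinarith

lemma phiA_strictMono : StrictMono phiA := by
  intro x y hxy
  rcases eq_or_lt_of_le (Int.floor_le_floor hxy.le) with h | h
  · unfold phiA
    rw [← h]
    have h2 : (0:ℝ) < 2 ^ (⌊x⌋ - 1 : ℤ) := by positivity
    nlinarith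
  · calc phiA x < 2 ^ (⌊x⌋ : ℤ) := phiA_lt x
    _ ≤ 2 ^ (⌊y⌋ - 1 : ℤ) := by
        apply zpow_le_zpow_right₀ (by norm_num)
        omega
    _ ≤ phiA y := phiA_ge y

lemma phiA_zero : phiA 0 = 1 / 2 := by
  have h := phiA_int 0
  push_cast at h
  rw [h, zpow_neg, zpow_one]
  norm_num

lemma phiA_lt_half {x : ℝ} (h : x < 0) : phiA x < 1 / 2 := by
  have h1 : ⌊x⌋ ≤ -1 := by
    have := Int.floor_le_floor h.le
    have h2 : ⌊x⌋ < 0 := Int.floor_lt.2 (by norm_num; exact h)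
    omega
  calc phiA x < 2 ^ (⌊x⌋ : ℤ) := phiA_lt x
  _ ≤ 2 ^ (-1 : ℤ) := zpow_le_zpow_right₀ (by norm_num) h1
  _ = 1 / 2 := by norm_num

lemma phiA_le_one {x : ℝ} (h : x ≤ 0) : phiA x < 1 := by
  rcases eq_or_lt_of_le h with rfl | h
  · rw [phiA_zero]; norm_num
  · linarith [phiA_lt_half h]

lemma phiA_affine (n : ℤ) {x : ℝ} (hx : x ∈ Set.Icc (n:ℝ) (n+1)) :
    phiA x = 2 ^ (n - 1 : ℤ) * (x - n + 1) := by
  rcases eq_or_lt_of_le hx.2 with h | h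
  · subst h
    rw [show ((n:ℝ) + 1) = ((n + 1 : ℤ) : ℝ) by push_cast; ring, phiA_int]
    push_cast
    rw [show (n + 1 - 1 : ℤ) = n - 1 + 1 by ring, zpow_add_one₀ (two_ne_zero : (2:ℝ) ≠ 0)]
    ring
  · have hfl : ⌊x⌋ = n := Int.floor_eq_iff.2 ⟨hx.1, by push_cast; exact h⟩
    unfold phiA
    rw [hfl]

lemma phiA_dyadic {x : ℝ} (h : IsDyadic x) : IsDyadic (phiA x) :=
  ((h.sub (IsDyadic.intCast ⌊x⌋)).add IsDyadic.one).zpow_mul _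

noncomputable def phi (x : ℝ) : ℝ := if x ≤ 0 then phiA x else 1 - phiA (-x)

lemma phi_of_nonpos {x : ℝ} (h : x ≤ 0) : phi x = phiA x := if_pos h

lemma phi_of_nonneg {x : ℝ} (h : 0 ≤ x) : phi x = 1 - phiA (-x) := by
  rcases eq_or_lt_of_le h with rfl | h'
  · rw [phi_of_nonpos (le_refl _), neg_zero, phiA_zero]
    norm_num
  · exact if_neg (not_le.2 h')

lemma phi_pos (x : ℝ) : 0 < phi x := by
  rcases le_total x 0 with h | h
  · rw [phi_of_nonpos h]; exact phiA_pos x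
  · rw [phi_of_nonneg h]
    have : -x ≤ 0 := by linarith
    linarith [phiA_le_one this]

lemma phi_lt_one (x : ℝ) : phi x < 1 := by
  rcases le_total x 0 with h | h
  · rw [phi_of_nonpos h]; exact phiA_le_one h
  · rw [phi_of_nonneg h]
    linarith [phiA_pos (-x)]

lemma phi_strictMono : StrictMono phi := by
  intro x y hxy
  rcases le_total y 0 with hy | hy
  · rw [phi_of_nonpos (le_trans hxy.le hy), phi_of_nonpos hy]
    exact phiA_strictMono hxy
  · rcases le_total x 0 with hx | hx
    · rw [phi_of_nonpos hx, phi_of_nonneg hy]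
      have h2 : phiA (-y) ≤ 1/2 := by
        rcases eq_or_lt_of_le hy with rfl | h
        · rw [neg_zero, phiA_zero]
        · exact (phiA_lt_half (by linarith)).le
      rcases lt_or_eq_of_le hx with h | h
      · have := phiA_lt_half h
        linarith
      · subst h
        have h3 : 0 < y := hxy
        have h4 := phiA_lt_half (show -y < 0 by linarith)
        rw [phiA_zero]
        linarith
    · rw [phi_of_nonneg hx, phi_of_nonneg hy]
      have := phiA_strictMono (neg_lt_neg hxy)
      linarith

lemma phi_dyadic {x : ℝ} (h : IsDyadic x) : IsDyadic (phi x) := by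
  rcases le_total x 0 with h' | h'
  · rw [phi_of_nonpos h']; exact phiA_dyadic h
  · rw [phi_of_nonneg h']; exact IsDyadic.one.sub (phiA_dyadic h.neg)

lemma phiA_surj {y : ℝ} (hy0 : 0 < y) (hy2 : y ≤ 1/2) : ∃ x, x ≤ 0 ∧ phiA x = y := by
  obtain ⟨n, hn1, hn2⟩ := exists_mem_Ico_zpow (x := y) (y := (2:ℝ)) hy0 (by norm_num)
  have hpow : (0:ℝ) < 2 ^ (-n : ℤ) := by positivity
  have he1 : (2:ℝ) ^ (-n : ℤ) * 2 ^ (n : ℤ) = 1 := by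
    rw [← zpow_add₀ (two_ne_zero : (2:ℝ) ≠ 0)]; simp
  have he2 : (2:ℝ) ^ (-n : ℤ) * 2 ^ (n + 1 : ℤ) = 2 := by
    rw [← zpow_add₀ (two_ne_zero : (2:ℝ) ≠ 0), show (-n + (n+1) : ℤ) = 1 by ring, zpow_one]
  have hys : (1:ℝ) ≤ 2 ^ (-n : ℤ) * y := by
    have := mul_le_mul_of_nonneg_left hn1 hpow.le
    rwa [he1] at this
  have hys2 : 2 ^ (-n : ℤ) * y < 2 := by
    have := mul_lt_mul_of_pos_left hn2 hpow
    rwa [he2] at this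
  set x : ℝ := n + 2 ^ (-n : ℤ) * y with hxdef
  have hxmem : x ∈ Set.Icc (((n+1 : ℤ)):ℝ) ((n+1 : ℤ) + 1) := by
    constructor
    · push_cast; linarith
    · push_cast; linarith
  have hn0 : n ≤ -1 := by
    by_contra hc
    push_neg at hc
    have h1 : (1:ℝ) ≤ 2 ^ (n:ℤ) := by
      calc (1:ℝ) = 2 ^ (0:ℤ) := by norm_num
      _ ≤ 2 ^ (n:ℤ) := zpow_le_zpow_right₀ (by norm_num) (by omega)
    linarith
  refine ⟨x, ?_, ?_⟩
  · rcases eq_or_lt_of_le hn0 with h | h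
    · subst h
      have e : (2:ℝ) ^ (-(-1:ℤ) : ℤ) = 2 := by
        rw [neg_neg, zpow_one]
      rw [hxdef, e]
      push_cast
      linarith
    · have h2 : (n:ℝ) + 2 ≤ 0 := by
        have : (n:ℤ) + 2 ≤ 0 := by omega
        exact_mod_cast this
      rw [hxdef]
      linarith
  · rw [phiA_affine (n+1) hxmem]
    have : x - (n+1 : ℤ) + 1 = 2 ^ (-n : ℤ) * y := by push_cast; rw [hxdef]; ring
    rw [this, show ((n:ℤ)+1-1 : ℤ) = n by ring, ← mul_assoc, ← zpow_add₀ (two_ne_zero : (2:ℝ) ≠ 0)]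
    simp

lemma phi_surj {y : ℝ} (h0 : 0 < y) (h1 : y < 1) : ∃ x, phi x = y := by
  rcases le_total y (1/2) with h | h
  · obtain ⟨x, hx0, hx⟩ := phiA_surj h0 h
    exact ⟨x, by rw [phi_of_nonpos hx0, hx]⟩
  · obtain ⟨x, hx0, hx⟩ := phiA_surj (show 0 < 1 - y by linarith) (by linarith)
    refine ⟨-x, ?_⟩
    rw [phi_of_nonneg (by linarith), neg_neg, hx]
    ring

/-- φ as an order isomorphism from ℝ onto the open interval (0,1). -/
noncomputable def phiIso : ℝ ≃o Set.Ioo (0:ℝ) 1 :=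
  StrictMono.orderIsoOfSurjective (fun x => ⟨phi x, phi_pos x, phi_lt_one x⟩)
    (fun a b h => Subtype.mk_lt_mk.2 (phi_strictMono h))
    (by
      rintro ⟨y, hy0, hy1⟩
      obtain ⟨x, hx⟩ := phi_surj hy0 hy1
      exact ⟨x, Subtype.ext hx⟩)

lemma phiIso_apply (x : ℝ) : (phiIso x : ℝ) = phi x := rfl

lemma phi_phiIso_symm (y : Set.Ioo (0:ℝ) 1) : phi (phiIso.symm y) = y := by
  have := phiIso.apply_symm_apply y
  calc phi (phiIso.symm y) = (phiIso (phiIso.symm y) : ℝ) := rfl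
  _ = (y : ℝ) := by rw [this]

lemma phiIso_symm_phi (x : ℝ) : phiIso.symm ⟨phi x, phi_pos x, phi_lt_one x⟩ = x := by
  have : (⟨phi x, phi_pos x, phi_lt_one x⟩ : Set.Ioo (0:ℝ) 1) = phiIso x := rfl
  rw [this, phiIso.symm_apply_apply]

/-- Key identity near `-∞`: translation becomes scaling. -/
lemma phi_add_int_of_nonpos {x : ℝ} {c : ℤ} (hx : x ≤ 0) (hxc : x + c ≤ 0) :
    phi (x + c) = 2 ^ c * phi x := by
  rw [phi_of_nonpos hxc, phi_of_nonpos hx]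
  exact phiA_add_int x c

/-- Key identity near `+∞`. -/
lemma phi_add_int_of_nonneg {x : ℝ} {c : ℤ} (hx : 0 ≤ x) (hxc : 0 ≤ x + c) :
    1 - phi (x + c) = 2 ^ (-c : ℤ) * (1 - phi x) := by
  rw [phi_of_nonneg hxc, phi_of_nonneg hx]
  have : -(x + (c:ℝ)) = -x + (-c : ℤ) := by push_cast; ring
  rw [this, phiA_add_int (-x) (-c)]
  ring

/-- φ is affine with a power-of-two slope on each interval `[n, n+1]`. -/
lemma phi_affine (n : ℤ) : ∃ c : ℤ, ∀ x ∈ Set.Icc ((n:ℝ)) ((n:ℝ)+1),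
    phi x = phi n + 2 ^ c * (x - n) := by
  rcases le_or_gt (n+1 : ℤ) 0 with hn | hn
  · -- n + 1 ≤ 0
    refine ⟨n - 1, fun x hx => ?_⟩
    have hx0 : x ≤ 0 := by
      have h1 : ((n:ℝ)+1) ≤ 0 := by exact_mod_cast hn
      linarith [hx.2]
    have hn0 : (n:ℝ) ≤ 0 := by
      have : (n:ℤ) ≤ 0 := by omega
      exact_mod_cast this
    rw [phi_of_nonpos hx0, phi_of_nonpos hn0, phiA_affine n hx, phiA_int n]
    ring
  · -- n ≥ 0
    refine ⟨-n - 2, fun x hx => ?_⟩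
    have hn0 : (0:ℝ) ≤ (n:ℝ) := by
      have : (0:ℤ) ≤ n := by omega
      exact_mod_cast this
    have hx0 : (0:ℝ) ≤ x := le_trans hn0 hx.1
    rw [phi_of_nonneg hx0, phi_of_nonneg hn0]
    have hmx : -x ∈ Set.Icc (((-(n+1) : ℤ)):ℝ) ((((-(n+1) : ℤ)):ℝ)+1) := by
      constructor
      · push_cast; linarith [hx.2]
      · push_cast; linarith [hx.1]
    have hmn : -(n:ℝ) ∈ Set.Icc (((-(n+1) : ℤ)):ℝ) ((((-(n+1) : ℤ)):ℝ)+1) := by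
      constructor
      · push_cast; linarith
      · push_cast; linarith
    have e1 := phiA_affine (-(n+1)) hmx
    have e2 := phiA_affine (-(n+1)) hmn
    rw [e1, e2, show ((-(n+1) : ℤ) - 1 : ℤ) = -n - 2 by ring]
    push_cast
    ring

/-! ### Conjugation by φ -/

noncomputable def conjFun (f : ℝ ≃o ℝ) : ℝ → ℝ :=
  fun x => if h : x ∈ Set.Ioo (0:ℝ) 1 then phi (f (phiIso.symm ⟨x, h⟩)) else x

lemma conjFun_of_mem (f : ℝ ≃o ℝ) {x : ℝ} (h : x ∈ Set.Ioo (0:ℝ) 1) :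
    conjFun f x = phi (f (phiIso.symm ⟨x, h⟩)) := dif_pos h

lemma conjFun_of_not_mem (f : ℝ ≃o ℝ) {x : ℝ} (h : x ∉ Set.Ioo (0:ℝ) 1) :
    conjFun f x = x := dif_neg h

lemma conjFun_phi (f : ℝ ≃o ℝ) (t : ℝ) : conjFun f (phi t) = phi (f t) := by
  rw [conjFun_of_mem f ⟨phi_pos t, phi_lt_one t⟩, phiIso_symm_phi]

lemma conjFun_zero (f : ℝ ≃o ℝ) : conjFun f 0 = 0 :=
  conjFun_of_not_mem f (by simp)

lemma conjFun_one (f : ℝ ≃o ℝ) : conjFun f 1 = 1 :=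
  conjFun_of_not_mem f (by simp)

lemma conjFun_strictMono (f : ℝ ≃o ℝ) : StrictMono (conjFun f) := by
  intro x y hxy
  by_cases hx : x ∈ Set.Ioo (0:ℝ) 1 <;> by_cases hy : y ∈ Set.Ioo (0:ℝ) 1
  · rw [conjFun_of_mem f hx, conjFun_of_mem f hy]
    exact phi_strictMono (f.strictMono (phiIso.symm.strictMono (Subtype.mk_lt_mk.2 hxy)))
  · rw [conjFun_of_mem f hx, conjFun_of_not_mem f hy]
    have h1 : (1:ℝ) ≤ y := by
      rcases not_and_or.1 hy with h | h
      · push_neg at h; linarith [hx.1]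
      · push_neg at h; exact h
    exact lt_of_lt_of_le (phi_lt_one _) h1
  · rw [conjFun_of_not_mem f hx, conjFun_of_mem f hy]
    have h1 : x ≤ 0 := by
      rcases not_and_or.1 hx with h | h
      · push_neg at h; exact h
      · push_neg at h; linarith [hy.2]
    exact lt_of_le_of_lt h1 (phi_pos _)
  · rw [conjFun_of_not_mem f hx, conjFun_of_not_mem f hy]
    exact hxy

lemma conjFun_leftInv (f : ℝ ≃o ℝ) (x : ℝ) : conjFun f.symm (conjFun f x) = x := by
  by_cases hx : x ∈ Set.Ioo (0:ℝ) 1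
  · rw [conjFun_of_mem f hx]
    rw [conjFun_phi f.symm]
    rw [f.symm_apply_apply]
    exact phi_phiIso_symm _
  · rw [conjFun_of_not_mem f hx, conjFun_of_not_mem f.symm hx]

noncomputable def conjIso (f : ℝ ≃o ℝ) : ℝ ≃o ℝ where
  toFun := conjFun f
  invFun := conjFun f.symm
  left_inv := conjFun_leftInv f
  right_inv := by
    have := conjFun_leftInv f.symm
    exact fun x => by simpa using this x
  map_rel_iff' := by
    intro x y
    constructor
    · intro h
      have := (conjFun_strictMono f.symm).monotone h
      have e1 := conjFun_leftInv f x
      have e2 := conjFun_leftInv f y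
      change conjFun f.symm (conjFun f x) ≤ conjFun f.symm (conjFun f y) at this
      rwa [e1, e2] at this
    · intro h
      exact (conjFun_strictMono f).monotone h

lemma conjIso_apply (f : ℝ ≃o ℝ) (x : ℝ) : conjIso f x = conjFun f x := rfl

lemma conjFun_mem_Icc (f : ℝ ≃o ℝ) {x : ℝ} (h : x ∈ Set.Icc (0:ℝ) 1) :
    conjFun f x ∈ Set.Icc (0:ℝ) 1 := by
  by_cases hx : x ∈ Set.Ioo (0:ℝ) 1
  · rw [conjFun_of_mem f hx]
    exact ⟨(phi_pos _).le, (phi_lt_one _).le⟩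
  · rw [conjFun_of_not_mem f hx]
    exact h

noncomputable def conjIcc (f : ℝ ≃o ℝ) : II ≃o II where
  toFun x := ⟨conjFun f x, conjFun_mem_Icc f x.2⟩
  invFun x := ⟨conjFun f.symm x, conjFun_mem_Icc f.symm x.2⟩
  left_inv x := Subtype.ext (conjFun_leftInv f x)
  right_inv x := Subtype.ext (by
    have := conjFun_leftInv f.symm x
    simpa using this)
  map_rel_iff' := by
    intro x y
    constructor
    · intro h
      have h' : conjFun f x ≤ conjFun f y := h
      have := (conjFun_strictMono f.symm).monotone h'
      rw [conjFun_leftInv f x, conjFun_leftInv f y] at this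
      exact_mod_cast this
    · intro h
      exact (conjFun_strictMono f).monotone (by exact_mod_cast h)

lemma conjIcc_apply (f : ℝ ≃o ℝ) (x : II) : (conjIcc f x : ℝ) = conjFun f x := rfl

lemma extIcc_conjIcc (f : ℝ ≃o ℝ) : extIcc (conjIcc f) = conjIso f := by
  apply OrderIso.ext
  funext x
  show extFun (conjIcc f) x = conjFun f x
  by_cases hx : x ∈ Set.Icc (0:ℝ) 1
  · rw [extFun_of_mem _ hx]
    rfl
  · rw [extFun_of_not_mem _ hx, conjFun_of_not_mem f (fun h => hx ⟨h.1.le, h.2.le⟩)]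

lemma conjIcc_mul (f g : ℝ ≃o ℝ) : conjIcc (f * g) = conjIcc f * conjIcc g := by
  apply OrderIso.ext
  funext x
  apply Subtype.ext
  show conjFun (f * g) (x:ℝ) = conjFun f (conjFun g (x:ℝ))
  by_cases hx : (x:ℝ) ∈ Set.Ioo (0:ℝ) 1
  · rw [conjFun_of_mem _ hx, conjFun_of_mem g hx]
    rw [conjFun_phi f]
    rfl
  · rw [conjFun_of_not_mem _ hx, conjFun_of_not_mem g hx, conjFun_of_not_mem f hx]

lemma conjIcc_injective : Function.Injective conjIcc := by
  intro f g h
  apply OrderIso.ext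
  funext t
  have h1 : conjFun f (phi t) = conjFun g (phi t) := by
    have e : ∀ x : II, (conjIcc f x : ℝ) = (conjIcc g x : ℝ) := fun x => by rw [h]
    have := e ⟨phi t, (phi_pos t).le, (phi_lt_one t).le⟩
    rwa [conjIcc_apply, conjIcc_apply] at this
  rw [conjFun_phi, conjFun_phi] at h1
  exact phi_strictMono.injective h1

/-! ### Lowering an isomorphism of [0,1] to ℝ -/

lemma extFun_mem_Ioo (g : II ≃o II) {x : ℝ} (h : x ∈ Set.Ioo (0:ℝ) 1) :
    extFun g x ∈ Set.Ioo (0:ℝ) 1 := by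
  have hIcc : x ∈ Set.Icc (0:ℝ) 1 := ⟨h.1.le, h.2.le⟩
  rw [extFun_of_mem g hIcc]
  constructor
  · have h0 : (⟨0, by norm_num⟩ : II) < ⟨x, hIcc⟩ := Subtype.mk_lt_mk.2 h.1
    have := g.strictMono h0
    rw [← fix_zero g]
    exact_mod_cast this
  · have h1 : (⟨x, hIcc⟩ : II) < ⟨1, by norm_num⟩ := Subtype.mk_lt_mk.2 h.2
    have := g.strictMono h1
    rw [← fix_one g]
    exact_mod_cast this

noncomputable def lowerFun (g : II ≃o II) : ℝ → ℝ :=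
  fun t => phiIso.symm ⟨extFun g (phi t), extFun_mem_Ioo g ⟨phi_pos t, phi_lt_one t⟩⟩

lemma phi_lowerFun (g : II ≃o II) (t : ℝ) : phi (lowerFun g t) = extFun g (phi t) := by
  unfold lowerFun
  exact phi_phiIso_symm _

lemma lowerFun_leftInv (g : II ≃o II) (t : ℝ) : lowerFun g.symm (lowerFun g t) = t := by
  have h1 : phi (lowerFun g.symm (lowerFun g t)) = phi t := by
    rw [phi_lowerFun, phi_lowerFun, extFun_leftInv]
  exact phi_strictMono.injective h1

lemma lowerFun_strictMono (g : II ≃o II) : StrictMono (lowerFun g) := by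
  intro x y hxy
  have h1 : phi (lowerFun g x) < phi (lowerFun g y) := by
    rw [phi_lowerFun, phi_lowerFun]
    have hx := extFun_mem_Ioo g (⟨phi_pos x, phi_lt_one x⟩ : phi x ∈ Set.Ioo (0:ℝ) 1)
    rw [extFun_of_mem g ⟨(phi_pos x).le, (phi_lt_one x).le⟩,
      extFun_of_mem g ⟨(phi_pos y).le, (phi_lt_one y).le⟩]
    exact_mod_cast g.strictMono (Subtype.mk_lt_mk.2 (phi_strictMono hxy))
  exact (phi_strictMono.lt_iff_lt).1 h1

noncomputable def lowerIso (g : II ≃o II) : ℝ ≃o ℝ where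
  toFun := lowerFun g
  invFun := lowerFun g.symm
  left_inv := lowerFun_leftInv g
  right_inv := by
    have := lowerFun_leftInv g.symm
    exact fun x => by simpa using this x
  map_rel_iff' := by
    intro x y
    constructor
    · intro h
      have := (lowerFun_strictMono g.symm).monotone h
      have e1 := lowerFun_leftInv g x
      have e2 := lowerFun_leftInv g y
      change lowerFun g.symm (lowerFun g x) ≤ lowerFun g.symm (lowerFun g y) at this
      rwa [e1, e2] at this
    · intro h
      exact (lowerFun_strictMono g).monotone h

lemma conjIcc_lowerIso (g : II ≃o II) : conjIcc (lowerIso g) = g := by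
  apply OrderIso.ext
  funext x
  apply Subtype.ext
  show conjFun (lowerIso g) (x:ℝ) = (g x : ℝ)
  by_cases hx : (x:ℝ) ∈ Set.Ioo (0:ℝ) 1
  · rw [conjFun_of_mem _ hx]
    have e1 : ((lowerIso g) (phiIso.symm ⟨(x:ℝ), hx⟩)) = lowerFun g (phiIso.symm ⟨(x:ℝ), hx⟩) := rfl
    rw [e1, phi_lowerFun, phi_phiIso_symm]
    rw [extFun_of_mem g x.2]
  · have hx01 : (x:ℝ) = 0 ∨ (x:ℝ) = 1 := by
      rcases not_and_or.1 hx with h | h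
      · push_neg at h
        exact Or.inl (le_antisymm h x.2.1)
      · push_neg at h
        exact Or.inr (le_antisymm x.2.2 h)
    rw [conjFun_of_not_mem _ hx]
    rcases hx01 with h | h
    · rw [h]
      have : x = (⟨0, by norm_num⟩ : II) := Subtype.ext h
      rw [this, fix_zero g]
    · rw [h]
      have : x = (⟨1, by norm_num⟩ : II) := Subtype.ext h
      rw [this, fix_one g]

/-- Extend a PL2R partition to any larger dyadic interval using the tails. -/
lemma PLP.extend {f : ℝ ≃o ℝ} {T : Finset ℝ} (hT : PLP f T) {a b : ℤ}
    (hta : ∀ s ≤ T.min' hT.nonempty, f s = s - a)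
    (htb : ∀ s, T.max' hT.nonempty ≤ s → f s = s - b) {L R : ℝ}
    (hL : L < T.min' hT.nonempty) (hR : T.max' hT.nonempty < R)
    (hLd : IsDyadic L) (hRd : IsDyadic R) :
    ∃ h2 : PLP f (insert R (insert L T)),
      (insert R (insert L T)).min' h2.nonempty = L ∧
      (insert R (insert L T)).max' h2.nonempty = R := by
  classical
  have hminmax : T.min' hT.nonempty ≤ T.max' hT.nonempty := Finset.min'_le _ _ (T.max'_mem _)
  have hT2 : PLP f (insert L T) := hT.insertLeft hL hLd ⟨0, by
    intro s hs
    rw [hta s hs.2, hta L hL.le]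
    simp⟩
  have hT2max : (insert L T).max' hT2.nonempty = T.max' hT.nonempty :=
    PLP.max'_eq _ (Finset.mem_insert_of_mem (T.max'_mem _)) (by
      intro x hx
      rcases Finset.mem_insert.1 hx with rfl | hx
      · linarith
      · exact Finset.le_max' _ _ hx)
  have hT3 : PLP f (insert R (insert L T)) := hT2.insertRight (by rw [hT2max]; exact hR) hRd ⟨0, by
    intro s hs
    rw [hT2max] at hs
    rw [htb s hs.1, hT2max, htb _ (le_refl _)]
    simp⟩
  refine ⟨hT3, ?_, ?_⟩
  · apply PLP.min'_eq _ (Finset.mem_insert_of_mem (Finset.mem_insert_self _ _))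
    intro x hx
    rcases Finset.mem_insert.1 hx with rfl | hx
    · linarith
    · rcases Finset.mem_insert.1 hx with rfl | hx
      · exact le_refl _
      · linarith [Finset.min'_le _ _ hx]
  · apply PLP.max'_eq _ (Finset.mem_insert_self _ _)
    intro x hx
    rcases Finset.mem_insert.1 hx with rfl | hx
    · exact le_refl _
    · rcases Finset.mem_insert.1 hx with rfl | hx
      · linarith
      · linarith [Finset.le_max' _ _ hx]

/-- The main forward computation: conjugating a PL₂(ℝ) element gives a PL₂(I) element. -/
lemma pl2Ip_conj {f : ℝ ≃o ℝ} (hf : PL2Rp f) : PL2Ip (conjIcc f) := by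
  classical
  obtain ⟨T, hT, a, b, hta, htb⟩ := hf
  -- integer bounds
  set L : ℤ := Min.min ⌊T.min' hT.nonempty⌋ (Min.min 0 a) - 1 with hLdef
  set R : ℤ := Max.max ⌈T.max' hT.nonempty⌉ (Max.max 0 b) + 1 with hRdef
  have hLlt : (L:ℝ) < T.min' hT.nonempty := by
    have h1 : (L:ℤ) ≤ ⌊T.min' hT.nonempty⌋ - 1 := by omega
    have h2 : ((⌊T.min' hT.nonempty⌋ - 1 : ℤ):ℝ) < T.min' hT.nonempty := by
      push_cast
      linarith [Int.floor_le (T.min' hT.nonempty)]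
    exact lt_of_le_of_lt (by exact_mod_cast h1) h2
  have hRgt : T.max' hT.nonempty < (R:ℝ) := by
    have h1 : (⌈T.max' hT.nonempty⌉ + 1 : ℤ) ≤ R := by omega
    have h2 : T.max' hT.nonempty < ((⌈T.max' hT.nonempty⌉ + 1 : ℤ):ℝ) := by
      push_cast
      linarith [Int.le_ceil (T.max' hT.nonempty)]
    exact lt_of_lt_of_le h2 (by exact_mod_cast h1)
  have hL0 : L ≤ -1 := by omega
  have hLa : L ≤ a - 1 := by omega
  have hR0 : (1:ℤ) ≤ R := by omega
  have hRb : b + 1 ≤ R := by omega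
  obtain ⟨h2, h2min, h2max⟩ := hT.extend hta htb hLlt hRgt (IsDyadic.intCast L) (IsDyadic.intCast R)
  set T2 : Finset ℝ := insert (R:ℝ) (insert (L:ℝ) T) with hT2def
  have hfL : f (L:ℝ) = (L:ℝ) - a := hta _ hLlt.le
  have hfR : f (R:ℝ) = (R:ℝ) - b := htb _ hRgt.le
  -- refine by integer points and their preimages
  set S1 : Finset ℝ := (Finset.Icc L R).image (fun k : ℤ => (k:ℝ)) with hS1def
  set S2 : Finset ℝ := (Finset.Icc (L - a) (R - b)).image (fun k : ℤ => f.symm (k:ℝ)) with hS2def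
  have hS1mem : ∀ x ∈ S1, ((L:ℝ) ≤ x ∧ x ≤ (R:ℝ)) ∧ IsDyadic x := by
    intro x hx
    obtain ⟨k, hk, rfl⟩ := Finset.mem_image.1 hx
    rw [Finset.mem_Icc] at hk
    exact ⟨⟨by exact_mod_cast hk.1, by exact_mod_cast hk.2⟩, IsDyadic.intCast k⟩
  have hS2mem : ∀ x ∈ S2, ((L:ℝ) ≤ x ∧ x ≤ (R:ℝ)) ∧ IsDyadic x := by
    intro x hx
    obtain ⟨k, hk, rfl⟩ := Finset.mem_image.1 hx
    rw [Finset.mem_Icc] at hk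
    have hk1 : (L:ℝ) - a ≤ (k:ℝ) := by
      have : ((L - a : ℤ):ℝ) ≤ (k:ℝ) := by exact_mod_cast hk.1
      push_cast at this; linarith
    have hk2 : (k:ℝ) ≤ (R:ℝ) - b := by
      have : ((k:ℤ):ℝ) ≤ ((R - b : ℤ):ℝ) := by exact_mod_cast hk.2
      push_cast at this; linarith
    have hmem1 : (L:ℝ) ≤ f.symm (k:ℝ) := by
      have : f (L:ℝ) ≤ (k:ℝ) := by rw [hfL]; linarith
      have h3 := f.symm.monotone this
      rwa [f.symm_apply_apply] at h3
    have hmem2 : f.symm (k:ℝ) ≤ (R:ℝ) := by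
      have : (k:ℝ) ≤ f (R:ℝ) := by rw [hfR]; linarith
      have h3 := f.symm.monotone this
      rwa [f.symm_apply_apply] at h3
    have hdy : IsDyadic (f.symm (k:ℝ)) := by
      have hrange : f.symm (k:ℝ) ∈ Set.Icc (T2.min' h2.nonempty) (T2.max' h2.nonempty) := by
        rw [h2min, h2max]; exact ⟨hmem1, hmem2⟩
      have := (h2.dyadic_iff hrange).2
      rw [f.apply_symm_apply] at this
      exact this (IsDyadic.intCast k)
    exact ⟨⟨hmem1, hmem2⟩, hdy⟩
  have h3 : PLP f (T2 ∪ (S1 ∪ S2)) := h2.refine (by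
    intro x hx
    rw [h2min, h2max]
    rcases Finset.mem_union.1 hx with hx | hx
    · exact hS1mem x hx
    · exact hS2mem x hx)
  set T3 : Finset ℝ := T2 ∪ (S1 ∪ S2) with hT3def
  have hT3bound : ∀ x ∈ T3, (L:ℝ) ≤ x ∧ x ≤ (R:ℝ) := by
    intro x hx
    rcases Finset.mem_union.1 hx with hx | hx
    · constructor
      · rw [← h2min]; exact Finset.min'_le _ _ hx
      · rw [← h2max]; exact Finset.le_max' _ _ hx
    · rcases Finset.mem_union.1 hx with hx | hx
      · exact (hS1mem x hx).1
      · exact (hS2mem x hx).1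
  have hT3min : T3.min' h3.nonempty = (L:ℝ) :=
    PLP.min'_eq _ (Finset.mem_union_left _ (by
      rw [hT2def]
      exact Finset.mem_insert_of_mem (Finset.mem_insert_self _ _)))
      (fun x hx => (hT3bound x hx).1)
  have hT3max : T3.max' h3.nonempty = (R:ℝ) :=
    PLP.max'_eq _ (Finset.mem_union_left _ (by
      rw [hT2def]
      exact Finset.mem_insert_self _ _))
      (fun x hx => (hT3bound x hx).2)
  have hF1 : ∀ k : ℤ, L ≤ k → k ≤ R → (k:ℝ) ∈ T3 := by
    intro k h1k h2k
    exact Finset.mem_union_right _ (Finset.mem_union_left _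
      (Finset.mem_image_of_mem _ (Finset.mem_Icc.2 ⟨h1k, h2k⟩)))
  have hF2 : ∀ k : ℤ, L - a ≤ k → k ≤ R - b → f.symm (k:ℝ) ∈ T3 := by
    intro k h1k h2k
    exact Finset.mem_union_right _ (Finset.mem_union_right _
      (Finset.mem_image_of_mem _ (Finset.mem_Icc.2 ⟨h1k, h2k⟩)))
  -- the partition of [0,1]
  set T' : Finset ℝ := insert 0 (insert 1 (T3.image phi)) with hT'def
  have hphimem : ∀ y ∈ T3, phi y ∈ T' := fun y hy =>
    Finset.mem_insert_of_mem (Finset.mem_insert_of_mem (Finset.mem_image_of_mem _ hy))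
  have hT'cases : ∀ x ∈ T', x = 0 ∨ x = 1 ∨ ∃ y ∈ T3, phi y = x := by
    intro x hx
    rcases Finset.mem_insert.1 hx with rfl | hx
    · exact Or.inl rfl
    · rcases Finset.mem_insert.1 hx with rfl | hx
      · exact Or.inr (Or.inl rfl)
      · obtain ⟨y, hy, rfl⟩ := Finset.mem_image.1 hx
        exact Or.inr (Or.inr ⟨y, hy, rfl⟩)
  have hT'bound : ∀ x ∈ T', 0 ≤ x ∧ x ≤ 1 := by
    intro x hx
    rcases hT'cases x hx with rfl | rfl | ⟨y, _, rfl⟩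
    · norm_num
    · norm_num
    · exact ⟨(phi_pos y).le, (phi_lt_one y).le⟩
  have hzero : (0:ℝ) ∈ T' := Finset.mem_insert_self _ _
  have hone : (1:ℝ) ∈ T' := Finset.mem_insert_of_mem (Finset.mem_insert_self _ _)
  have hLR : (L:ℝ) ≤ (R:ℝ) := by
    have : (L:ℤ) ≤ R := by omega
    exact_mod_cast this
  have hLmem : ((L:ℤ):ℝ) ∈ T3 := hF1 L (le_refl _) (by omega)
  have hRmem : ((R:ℤ):ℝ) ∈ T3 := hF1 R (by omega) (le_refl _)
  have hL1 : ((L:ℤ):ℝ) ≤ -1 := by exact_mod_cast hL0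
  have hR1 : (1:ℝ) ≤ ((R:ℤ):ℝ) := by exact_mod_cast hR0
  -- the main PLP statement
  have hPLP : PLP (conjIso f) T' := by
    refine ⟨⟨0, hzero⟩, ?_, ?_⟩
    · intro x hx
      rcases hT'cases x hx with rfl | rfl | ⟨y, hy, rfl⟩
      · rw [conjIso_apply, conjFun_zero]
        exact ⟨IsDyadic.zero, IsDyadic.zero⟩
      · rw [conjIso_apply, conjFun_one]
        exact ⟨IsDyadic.one, IsDyadic.one⟩
      · rw [conjIso_apply, conjFun_phi]
        exact ⟨phi_dyadic (h3.2.1 y hy).1, phi_dyadic (h3.2.1 y hy).2⟩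
    · intro p hp q hq hpq hcons
      have hq1 : q ≤ 1 := (hT'bound q hq).2
      have hp0 : 0 ≤ p := (hT'bound p hp).1
      rcases hT'cases p hp with rfl | rfl | ⟨u, hu, hup⟩
      · -- case p = 0 : slope 2^{-a} near the left endpoint
        have hqL : q ≤ phi L := by
          rcases hcons (phi L) (hphimem _ hLmem) with h' | h'
          · exact absurd (lt_of_lt_of_le (phi_pos _) h') (lt_irrefl _)
          · exact h'
        refine ⟨-a, fun s hs => ?_⟩
        rw [conjIso_apply, conjIso_apply, conjFun_zero]
        rcases eq_or_lt_of_le hs.1 with rfl | hs0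
        · rw [conjFun_zero]; ring
        · have hs1 : s < 1 := lt_of_le_of_lt (le_trans hs.2 hqL) (phi_lt_one _)
          rw [conjFun_of_mem f ⟨hs0, hs1⟩]
          set t := phiIso.symm ⟨s, hs0, hs1⟩ with htdef
          have hpt : phi t = s := phi_phiIso_symm _
          have htL : t ≤ (L:ℝ) := by
            apply (phi_strictMono.le_iff_le).1
            rw [hpt]
            exact le_trans hs.2 hqL
          have hft : f t = t + ((-a : ℤ):ℝ) := by
            rw [hta t (le_trans htL hLlt.le)]
            push_cast
            ring
          rw [hft, phi_add_int_of_nonpos (by linarith) (by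
            push_cast
            have : (L:ℝ) ≤ (a:ℝ) - 1 := by exact_mod_cast hLa
            linarith)]
          rw [hpt]
          ring
      · -- case p = 1 : impossible
        exact absurd (lt_of_lt_of_le hpq hq1) (lt_irrefl _)
      · -- p = phi u
        rcases hT'cases q hq with rfl | rfl | ⟨v, hv, hvq⟩
        · exact absurd (lt_of_le_of_lt hp0 hpq) (lt_irrefl _)
        · -- case q = 1 : slope 2^{b} near the right endpoint
          have hpR : phi R ≤ p := by
            rcases hcons (phi R) (hphimem _ hRmem) with h' | h'
            · exact h'
            · exact absurd (lt_of_lt_of_le (phi_lt_one _) h') (lt_irrefl _)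
          have key : ∀ s ∈ Set.Icc p 1, 1 - conjFun f s = 2 ^ (b:ℤ) * (1 - s) := by
            intro s hs
            rcases eq_or_lt_of_le hs.2 with rfl | hs1
            · rw [conjFun_one]; ring
            · have hs0 : 0 < s := lt_of_lt_of_le (lt_of_lt_of_le (phi_pos (R:ℝ)) hpR) hs.1
              rw [conjFun_of_mem f ⟨hs0, hs1⟩]
              set t := phiIso.symm ⟨s, hs0, hs1⟩ with htdef
              have hpt : phi t = s := phi_phiIso_symm _
              have htR : (R:ℝ) ≤ t := by
                apply (phi_strictMono.le_iff_le).1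
                rw [hpt]
                exact le_trans hpR hs.1
              have hft : f t = t + ((-b : ℤ):ℝ) := by
                rw [htb t (le_trans hRgt.le htR)]
                push_cast
                ring
              have hcond : (0:ℝ) ≤ t + ((-b : ℤ):ℝ) := by
                push_cast
                have : (b:ℝ) + 1 ≤ (R:ℝ) := by exact_mod_cast hRb
                linarith
              have := phi_add_int_of_nonneg (show (0:ℝ) ≤ t by linarith) hcond
              rw [hft, ← hpt]
              rw [this]
              simp only [neg_neg]
          have e1 := key p ⟨le_refl _, le_trans hpq.le hq1⟩
          refine ⟨b, fun s hs => ?_⟩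
          have e2 := key s hs
          rw [conjIso_apply, conjIso_apply]
          have e3 : conjFun f s - conjFun f p = (1 - conjFun f p) - (1 - conjFun f s) := by ring
          rw [e3, e1, e2]
          ring
        · -- main case : p = phi u, q = phi v
          subst hup
          subst hvq
          have huv : u < v := phi_strictMono.lt_iff_lt.1 hpq
          have hconsT3 : ∀ x ∈ T3, x ≤ u ∨ v ≤ x := by
            intro x hx
            rcases hcons (phi x) (hphimem x hx) with h' | h'
            · exact Or.inl ((phi_strictMono.le_iff_le).1 h')
            · exact Or.inr ((phi_strictMono.le_iff_le).1 h')
          have hLu : (L:ℝ) ≤ u := (hT3bound u hu).1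
          have huR : u < (R:ℝ) := lt_of_lt_of_le huv (hT3bound v hv).2
          set n : ℤ := ⌊u⌋ with hndef
          have hnu : (n:ℝ) ≤ u := Int.floor_le u
          have hun1 : u < (n:ℝ) + 1 := Int.lt_floor_add_one u
          have hLn : L ≤ n := Int.le_floor.2 hLu
          have hnR : n + 1 ≤ R := by
            have : (n:ℝ) < (R:ℝ) := lt_of_le_of_lt hnu huR
            have : n < R := by exact_mod_cast this
            omega
          have hv1 : v ≤ (n:ℝ) + 1 := by
            by_contra hc
            push_neg at hc
            have hmem : ((n + 1 : ℤ):ℝ) ∈ T3 := hF1 (n+1) (by omega) hnR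
            rcases hconsT3 _ hmem with h' | h'
            · push_cast at h'; linarith
            · push_cast at h'; linarith
          -- image side
          have hfLu : f (L:ℝ) ≤ f u := f.monotone hLu
          have hfuv : f u < f v := f.strictMono huv
          have hfvR : f v ≤ f (R:ℝ) := f.monotone (hT3bound v hv).2
          set n' : ℤ := ⌊f u⌋ with hn'def
          have hn'fu : (n':ℝ) ≤ f u := Int.floor_le _
          have hfun1 : f u < (n':ℝ) + 1 := Int.lt_floor_add_one _
          have hn'1 : L - a ≤ n' := by
            apply Int.le_floor.2
            rw [hfL] at hfLu
            push_cast
            linarith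
          have hn'2 : n' + 1 ≤ R - b := by
            have h1 : (n':ℝ) < (R:ℝ) - b := by
              rw [hfR] at hfvR
              linarith
            have : (n':ℝ) < ((R - b : ℤ):ℝ) := by push_cast; linarith
            have : n' < R - b := by exact_mod_cast this
            omega
          have hfv1 : f v ≤ (n':ℝ) + 1 := by
            by_contra hc
            push_neg at hc
            have hmem : f.symm (((n' + 1 : ℤ)):ℝ) ∈ T3 := hF2 (n'+1) (by omega) hn'2
            have hx1 : u < f.symm ((n' + 1 : ℤ):ℝ) := by
              rw [← f.symm_apply_apply u]
              apply f.symm.strictMono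
              push_cast
              linarith
            have hx2 : f.symm ((n' + 1 : ℤ):ℝ) < v := by
              rw [← f.symm_apply_apply v]
              apply f.symm.strictMono
              push_cast
              linarith
            rcases hconsT3 _ hmem with h' | h'
            · linarith
            · linarith
          obtain ⟨z, hz⟩ := h3.2.2 u hu v hv huv hconsT3
          obtain ⟨c, hc⟩ := phi_affine n
          obtain ⟨c', hc'⟩ := phi_affine n'
          refine ⟨c' + z - c, fun s hs => ?_⟩
          rw [conjIso_apply, conjIso_apply]
          have hs0 : 0 < s := lt_of_lt_of_le (phi_pos u) hs.1
          have hs1 : s < 1 := lt_of_le_of_lt hs.2 (phi_lt_one v)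
          rw [conjFun_of_mem f ⟨hs0, hs1⟩]
          set t := phiIso.symm ⟨s, hs0, hs1⟩ with htdef
          have hpt : phi t = s := phi_phiIso_symm _
          have htu : u ≤ t := (phi_strictMono.le_iff_le).1 (by rw [hpt]; exact hs.1)
          have htv : t ≤ v := (phi_strictMono.le_iff_le).1 (by rw [hpt]; exact hs.2)
          have htn : t ∈ Set.Icc ((n:ℝ)) ((n:ℝ)+1) := ⟨le_trans hnu htu, le_trans htv hv1⟩
          have hun : u ∈ Set.Icc ((n:ℝ)) ((n:ℝ)+1) := ⟨hnu, le_trans huv.le hv1⟩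
          have hftn : f t ∈ Set.Icc ((n':ℝ)) ((n':ℝ)+1) :=
            ⟨le_trans hn'fu (f.monotone htu), le_trans (f.monotone htv) hfv1⟩
          have hfun : f u ∈ Set.Icc ((n':ℝ)) ((n':ℝ)+1) := ⟨hn'fu, le_trans hfuv.le hfv1⟩
          have e_s : s = phi n + 2 ^ c * (t - n) := by rw [← hpt]; exact hc t htn
          have e_p : phi u = phi n + 2 ^ c * (u - n) := hc u hun
          have e_f := hz t ⟨htu, htv⟩
          have e_cs : phi (f t) = phi n' + 2 ^ c' * (f t - n') := hc' (f t) hftn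
          have e_cp : conjFun f (phi u) = phi n' + 2 ^ c' * (f u - n') := by
            rw [conjFun_phi]
            exact hc' (f u) hfun
          have hzz : (2:ℝ) ^ (c' + z - c) * (2:ℝ) ^ c = 2 ^ c' * 2 ^ z := by
            rw [← zpow_add₀ (two_ne_zero : (2:ℝ) ≠ 0), ← zpow_add₀ (two_ne_zero : (2:ℝ) ≠ 0)]
            congr 1
            ring
          have hsp : s - phi u = 2 ^ c * (t - u) := by
            rw [e_s, e_p]; ring
          calc phi (f t) - conjFun f (phi u) = 2 ^ c' * (f t - f u) := by
                rw [e_cs, e_cp]; ring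
          _ = 2 ^ c' * (2 ^ z * (t - u)) := by rw [e_f]
          _ = ((2:ℝ) ^ (c' + z - c) * 2 ^ c) * (t - u) := by rw [hzz]; ring
          _ = 2 ^ (c' + z - c) * (s - phi u) := by rw [hsp]; ring
  have hPLP' : PLP (extIcc (conjIcc f)) T' := by
    rw [extIcc_conjIcc]
    exact hPLP
  refine ⟨T', hPLP', ?_, ?_⟩
  · exact PLP.min'_eq _ hzero (fun x hx => (hT'bound x hx).1)
  · exact PLP.max'_eq _ hone (fun x hx => (hT'bound x hx).2)

/-- If `phi x` is dyadic then so is `x`. -/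
lemma dyadic_of_phi_dyadic {x : ℝ} (h : IsDyadic (phi x)) : IsDyadic x := by
  obtain ⟨c, hc⟩ := phi_affine ⌊x⌋
  have hx : x ∈ Set.Icc ((⌊x⌋:ℝ)) ((⌊x⌋:ℝ)+1) := ⟨Int.floor_le x, (Int.lt_floor_add_one x).le⟩
  have e := hc x hx
  have h2 : (2:ℝ)^c ≠ 0 := by positivity
  have e2 : x = (⌊x⌋:ℝ) + 2 ^ (-c : ℤ) * (phi x - phi ⌊x⌋) := by
    rw [e, zpow_neg]
    field_simp
    ring
  rw [e2]
  exact (IsDyadic.intCast ⌊x⌋).affine (-c) (phi_dyadic (IsDyadic.intCast ⌊x⌋)) h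

lemma phi_lowerIso (g : II ≃o II) (t : ℝ) : phi (lowerIso g t) = extIcc g (phi t) :=
  phi_lowerFun g t

/-- The main backward computation: lowering a PL₂(I) element gives a PL₂(ℝ) element. -/
lemma pl2Rp_lower {g : II ≃o II} (hg : PL2Ip g) : PL2Rp (lowerIso g) := by
  classical
  obtain ⟨U, hU, hUmin, hUmax⟩ := hg
  set G : ℝ ≃o ℝ := extIcc g with hGdef
  set f : ℝ ≃o ℝ := lowerIso g with hfdef
  have hUbound : ∀ u ∈ U, 0 ≤ u ∧ u ≤ 1 := by
    intro u hu
    constructor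
    · rw [← hUmin]; exact Finset.min'_le _ _ hu
    · rw [← hUmax]; exact Finset.le_max' _ _ hu
  have h0U : (0:ℝ) ∈ U := hUmin ▸ U.min'_mem hU.nonempty
  have h1U : (1:ℝ) ∈ U := hUmax ▸ U.max'_mem hU.nonempty
  have hG0 : G (0:ℝ) = 0 := extFun_zero g
  have hG1 : G (1:ℝ) = 1 := extFun_one g
  -- first interior breakpoint
  have herase0 : ((1:ℝ)) ∈ U.erase 0 := Finset.mem_erase.2 ⟨by norm_num, h1U⟩
  set u₁ : ℝ := (U.erase 0).min' ⟨1, herase0⟩ with hu₁def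
  have hu₁U : u₁ ∈ U := Finset.mem_of_mem_erase ((U.erase 0).min'_mem _)
  have hu₁pos : 0 < u₁ := by
    have h1 := (hUbound u₁ hu₁U).1
    have h2 : u₁ ≠ 0 := Finset.ne_of_mem_erase ((U.erase 0).min'_mem _)
    exact lt_of_le_of_ne h1 (Ne.symm h2)
  have hcons0 : ∀ x ∈ U, x ≤ 0 ∨ u₁ ≤ x := by
    intro x hx
    rcases eq_or_ne x 0 with rfl | hne
    · exact Or.inl (le_refl _)
    · exact Or.inr (Finset.min'_le _ _ (Finset.mem_erase.2 ⟨hne, hx⟩))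
  obtain ⟨z₀, hz₀⟩ := hU.2.2 0 h0U u₁ hu₁U hu₁pos hcons0
  -- last interior breakpoint
  have herase1 : ((0:ℝ)) ∈ U.erase 1 := Finset.mem_erase.2 ⟨by norm_num, h0U⟩
  set u₂ : ℝ := (U.erase 1).max' ⟨0, herase1⟩ with hu₂def
  have hu₂U : u₂ ∈ U := Finset.mem_of_mem_erase ((U.erase 1).max'_mem _)
  have hu₂lt : u₂ < 1 := by
    have h1 := (hUbound u₂ hu₂U).2
    have h2 : u₂ ≠ 1 := Finset.ne_of_mem_erase ((U.erase 1).max'_mem _)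
    exact lt_of_le_of_ne h1 h2
  have hcons1 : ∀ x ∈ U, x ≤ u₂ ∨ 1 ≤ x := by
    intro x hx
    rcases eq_or_ne x 1 with rfl | hne
    · exact Or.inr (le_refl _)
    · exact Or.inl (Finset.le_max' _ _ (Finset.mem_erase.2 ⟨hne, hx⟩))
  obtain ⟨z₁, hz₁⟩ := hU.2.2 u₂ hu₂U 1 h1U hu₂lt hcons1
  -- slope formulas near the endpoints
  have hGlow : ∀ y ∈ Set.Icc (0:ℝ) u₁, G y = 2 ^ z₀ * y := by
    intro y hy
    have := hz₀ y hy
    rw [hG0] at this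
    linarith
  have hGhigh : ∀ y ∈ Set.Icc u₂ 1, G y = 1 - 2 ^ z₁ * (1 - y) := by
    intro y hy
    have h1 := hz₁ y hy
    have h2 := hz₁ 1 ⟨hu₂lt.le, le_refl _⟩
    rw [hG1] at h2
    linarith
  -- reference interior points
  have hwmem : Min.min u₁ (1/2) ∈ Set.Ioo (0:ℝ) 1 :=
    ⟨lt_min hu₁pos (by norm_num), lt_of_le_of_lt (min_le_right _ _) (by norm_num)⟩
  set w : ℝ := phiIso.symm ⟨Min.min u₁ (1/2), hwmem⟩ with hwdef
  have hphiw : phi w = Min.min u₁ (1/2) := phi_phiIso_symm _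
  have hw'mem : Max.max u₂ (1/2) ∈ Set.Ioo (0:ℝ) 1 :=
    ⟨lt_of_lt_of_le (by norm_num) (le_max_right _ _), max_lt hu₂lt (by norm_num)⟩
  set w' : ℝ := phiIso.symm ⟨Max.max u₂ (1/2), hw'mem⟩ with hw'def
  have hphiw' : phi w' = Max.max u₂ (1/2) := phi_phiIso_symm _
  have hww' : w ≤ w' := by
    apply (phi_strictMono.le_iff_le).1
    rw [hphiw, hphiw']
    exact le_trans (min_le_right _ _) (le_max_right _ _)
  -- integer bounds
  set L : ℤ := Min.min ⌊w⌋ (Min.min 0 (-z₀)) with hLdef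
  set R : ℤ := Max.max ⌈w'⌉ (Max.max 0 z₁) with hRdef
  have hLw : (L:ℝ) ≤ w := le_trans (by exact_mod_cast (by omega : L ≤ ⌊w⌋)) (Int.floor_le w)
  have hRw' : w' ≤ (R:ℝ) := le_trans (Int.le_ceil w') (by exact_mod_cast (by omega : ⌈w'⌉ ≤ R))
  have hL0 : L ≤ 0 := by omega
  have hLz : L ≤ -z₀ := by omega
  have hR0 : 0 ≤ R := by omega
  have hRz : z₁ ≤ R := by omega
  have hLR : (L:ℝ) ≤ (R:ℝ) := by
    have : (L:ℤ) ≤ R := by omega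
    exact_mod_cast this
  -- the tails
  have htail_a : ∀ s : ℝ, s ≤ (L:ℝ) → f s = s - ((-z₀ : ℤ):ℝ) := by
    intro s hs
    have hsw : s ≤ w := le_trans hs hLw
    have hphis : phi s ≤ u₁ := by
      calc phi s ≤ phi w := phi_strictMono.monotone hsw
      _ ≤ u₁ := by rw [hphiw]; exact min_le_left _ _
    have e1 : phi (f s) = G (phi s) := phi_lowerIso g s
    have e2 : G (phi s) = 2 ^ z₀ * phi s := hGlow _ ⟨(phi_pos s).le, hphis⟩
    have hsL0 : s ≤ 0 := le_trans hs (by exact_mod_cast hL0)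
    have hsz : s + (z₀:ℝ) ≤ 0 := by
      have : (L:ℝ) ≤ (-z₀ : ℤ) := by exact_mod_cast hLz
      push_cast at this
      linarith
    have e3 : phi (s + (z₀:ℤ)) = 2 ^ z₀ * phi s := phi_add_int_of_nonpos hsL0 (by exact_mod_cast hsz)
    have e4 : phi (f s) = phi (s + (z₀:ℝ)) := by
      rw [e1, e2, ← e3]
    have := phi_strictMono.injective e4
    rw [this]
    push_cast
    ring
  have htail_b : ∀ s : ℝ, (R:ℝ) ≤ s → f s = s - (z₁:ℝ) := by
    intro s hs
    have hsw : w' ≤ s := le_trans hRw' hs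
    have hphis : u₂ ≤ phi s := by
      calc u₂ ≤ phi w' := by rw [hphiw']; exact le_max_left _ _
      _ ≤ phi s := phi_strictMono.monotone hsw
    have e1 : phi (f s) = G (phi s) := phi_lowerIso g s
    have e2 : G (phi s) = 1 - 2 ^ z₁ * (1 - phi s) := hGhigh _ ⟨hphis, (phi_lt_one s).le⟩
    have hs0 : (0:ℝ) ≤ s := le_trans (by exact_mod_cast hR0) hs
    have hsz : (0:ℝ) ≤ s + ((-z₁ : ℤ):ℝ) := by
      have : ((z₁:ℤ):ℝ) ≤ (R:ℝ) := by exact_mod_cast hRz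
      push_cast at this ⊢
      linarith
    have e3 := phi_add_int_of_nonneg hs0 hsz
    rw [neg_neg] at e3
    have e4 : phi (f s) = phi (s + ((-z₁ : ℤ):ℝ)) := by
      rw [e1, e2]
      linarith
    have := phi_strictMono.injective e4
    rw [this]
    push_cast
    ring
  have hfL : f (L:ℝ) = (L:ℝ) + z₀ := by
    rw [htail_a _ (le_refl _)]; push_cast; ring
  have hfR : f (R:ℝ) = (R:ℝ) - z₁ := htail_b _ (le_refl _)
  -- the partition
  set ψ : ℝ → ℝ := fun u => if h : u ∈ Set.Ioo (0:ℝ) 1 then (phiIso.symm ⟨u, h⟩ : ℝ) else 0 with hψdef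
  have hψ_phi : ∀ {u : ℝ} (h : u ∈ Set.Ioo (0:ℝ) 1), phi (ψ u) = u := by
    intro u h
    rw [hψdef]
    simp only [dif_pos h]
    exact phi_phiIso_symm _
  set S0 : Finset ℝ := (U.filter (fun u => 0 < u ∧ u < 1)).image ψ with hS0def
  set S1 : Finset ℝ := (Finset.Icc L R).image (fun k : ℤ => (k:ℝ)) with hS1def
  set S2 : Finset ℝ := (Finset.Icc (L + z₀) (R - z₁)).image (fun k : ℤ => f.symm (k:ℝ)) with hS2def
  set T : Finset ℝ := S0 ∪ (S1 ∪ S2) with hTdef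
  have hFψ : ∀ u ∈ U, 0 < u → u < 1 → ψ u ∈ T := by
    intro u hu h0 h1
    exact Finset.mem_union_left _ (Finset.mem_image_of_mem _ (Finset.mem_filter.2 ⟨hu, h0, h1⟩))
  have hF1 : ∀ k : ℤ, L ≤ k → k ≤ R → (k:ℝ) ∈ T := by
    intro k h1 h2
    exact Finset.mem_union_right _ (Finset.mem_union_left _
      (Finset.mem_image_of_mem _ (Finset.mem_Icc.2 ⟨h1, h2⟩)))
  have hF2 : ∀ k : ℤ, L + z₀ ≤ k → k ≤ R - z₁ → f.symm (k:ℝ) ∈ T := by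
    intro k h1 h2
    exact Finset.mem_union_right _ (Finset.mem_union_right _
      (Finset.mem_image_of_mem _ (Finset.mem_Icc.2 ⟨h1, h2⟩)))
  have hψbound : ∀ u ∈ U, 0 < u → u < 1 → (L:ℝ) ≤ ψ u ∧ ψ u ≤ (R:ℝ) := by
    intro u hu h0 h1
    have hioo : u ∈ Set.Ioo (0:ℝ) 1 := ⟨h0, h1⟩
    have hphiψ : phi (ψ u) = u := hψ_phi hioo
    have hle : Min.min u₁ (1/2) ≤ u := by
      rcases hcons0 u hu with h' | h'
      · linarith
      · exact le_trans (min_le_left _ _) h'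
    have hge : u ≤ Max.max u₂ (1/2) := by
      rcases hcons1 u hu with h' | h'
      · exact le_trans h' (le_max_left _ _)
      · linarith
    constructor
    · refine le_trans hLw ((phi_strictMono.le_iff_le).1 ?_)
      rw [hphiψ, hphiw]
      exact hle
    · refine le_trans ((phi_strictMono.le_iff_le).1 ?_) hRw'
      rw [hphiψ, hphiw']
      exact hge
  have hbound : ∀ x ∈ T, (L:ℝ) ≤ x ∧ x ≤ (R:ℝ) := by
    intro x hx
    rcases Finset.mem_union.1 hx with hx | hx
    · obtain ⟨u, hu, rfl⟩ := Finset.mem_image.1 hx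
      obtain ⟨huU, h0, h1⟩ := Finset.mem_filter.1 hu
      exact hψbound u huU h0 h1
    · rcases Finset.mem_union.1 hx with hx | hx
      · obtain ⟨k, hk, rfl⟩ := Finset.mem_image.1 hx
        rw [Finset.mem_Icc] at hk
        exact ⟨by exact_mod_cast hk.1, by exact_mod_cast hk.2⟩
      · obtain ⟨k, hk, rfl⟩ := Finset.mem_image.1 hx
        rw [Finset.mem_Icc] at hk
        have hk1 : f (L:ℝ) ≤ (k:ℝ) := by
          rw [hfL]
          have : ((L + z₀ : ℤ):ℝ) ≤ (k:ℝ) := by exact_mod_cast hk.1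
          push_cast at this
          linarith
        have hk2 : (k:ℝ) ≤ f (R:ℝ) := by
          rw [hfR]
          have : ((k:ℤ):ℝ) ≤ ((R - z₁ : ℤ):ℝ) := by exact_mod_cast hk.2
          push_cast at this
          linarith
        constructor
        · have := f.symm.monotone hk1
          rwa [f.symm_apply_apply] at this
        · have := f.symm.monotone hk2
          rwa [f.symm_apply_apply] at this
  have hUrange : ∀ y : ℝ, 0 ≤ y → y ≤ 1 →
      y ∈ Set.Icc (U.min' hU.nonempty) (U.max' hU.nonempty) := by
    intro y h0 h1
    rw [hUmin, hUmax]
    exact ⟨h0, h1⟩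
  have hdyadic : ∀ x ∈ T, IsDyadic x ∧ IsDyadic (f x) := by
    intro x hx
    rcases Finset.mem_union.1 hx with hx | hx
    · obtain ⟨u, hu, rfl⟩ := Finset.mem_image.1 hx
      obtain ⟨huU, h0, h1⟩ := Finset.mem_filter.1 hu
      have hphiψ : phi (ψ u) = u := hψ_phi ⟨h0, h1⟩
      constructor
      · exact dyadic_of_phi_dyadic (by rw [hphiψ]; exact (hU.2.1 u huU).1)
      · apply dyadic_of_phi_dyadic
        rw [phi_lowerIso g, hphiψ]
        exact (hU.2.1 u huU).2
    · rcases Finset.mem_union.1 hx with hx | hx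
      · obtain ⟨k, hk, rfl⟩ := Finset.mem_image.1 hx
        refine ⟨IsDyadic.intCast k, ?_⟩
        apply dyadic_of_phi_dyadic
        rw [phi_lowerIso g]
        exact (hU.dyadic_iff (hUrange _ (phi_pos _).le (phi_lt_one _).le)).1
          (phi_dyadic (IsDyadic.intCast k))
      · obtain ⟨k, hk, rfl⟩ := Finset.mem_image.1 hx
        have hfx : f (f.symm (k:ℝ)) = (k:ℝ) := f.apply_symm_apply _
        constructor
        · apply dyadic_of_phi_dyadic
          apply (hU.dyadic_iff (hUrange _ (phi_pos _).le (phi_lt_one _).le)).2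
          have e : (extIcc g) (phi (f.symm (k:ℝ))) = phi (k:ℝ) := by
            rw [← phi_lowerIso g, hfx]
          rw [e]
          exact phi_dyadic (IsDyadic.intCast k)
        · rw [hfx]
          exact IsDyadic.intCast k
  have hne : T.Nonempty := ⟨(L:ℝ), hF1 L (le_refl _) (by omega)⟩
  have hPLP : PLP f T := by
    refine ⟨hne, hdyadic, ?_⟩
    intro p hp q hq hpq hcons
    have hpL : (L:ℝ) ≤ p := (hbound p hp).1
    have hqR : q ≤ (R:ℝ) := (hbound q hq).2
    set n : ℤ := ⌊p⌋ with hndef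
    have hnp : (n:ℝ) ≤ p := Int.floor_le p
    have hpn1 : p < (n:ℝ) + 1 := Int.lt_floor_add_one p
    have hLn : L ≤ n := Int.le_floor.2 hpL
    have hnR : n + 1 ≤ R := by
      have h1 : (n:ℝ) < (R:ℝ) := lt_of_le_of_lt hnp (lt_of_lt_of_le hpq hqR)
      have : n < R := by exact_mod_cast h1
      omega
    have hq_n1 : q ≤ (n:ℝ) + 1 := by
      by_contra hc
      push_neg at hc
      have hmem : ((n + 1 : ℤ):ℝ) ∈ T := hF1 (n+1) (by omega) hnR
      rcases hcons _ hmem with h' | h'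
      · push_cast at h'; linarith
      · push_cast at h'; linarith
    -- gap in U around [phi p, phi q]
    have hgapU : ∀ y ∈ U, ¬(phi p < y ∧ y < phi q) := by
      rintro y hy ⟨h1, h2⟩
      have hioo : y ∈ Set.Ioo (0:ℝ) 1 :=
        ⟨lt_trans (phi_pos p) h1, lt_trans h2 (phi_lt_one q)⟩
      have hmem : ψ y ∈ T := hFψ y hy hioo.1 hioo.2
      have hphiψ : phi (ψ y) = y := hψ_phi hioo
      have hx1 : p < ψ y := by
        apply phi_strictMono.lt_iff_lt.1
        rw [hphiψ]
        exact h1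
      have hx2 : ψ y < q := by
        apply phi_strictMono.lt_iff_lt.1
        rw [hphiψ]
        exact h2
      rcases hcons _ hmem with h' | h'
      · linarith
      · linarith
    obtain ⟨zg, hzg⟩ := hU.slope_of_gap
      (by rw [hUmin]; exact (phi_pos p).le)
      (by rw [hUmax]; exact (phi_lt_one q).le)
      (phi_strictMono hpq) hgapU
    -- image side
    have hfLp : f (L:ℝ) ≤ f p := f.monotone hpL
    have hfpq : f p < f q := f.strictMono hpq
    have hfqR : f q ≤ f (R:ℝ) := f.monotone hqR
    set n' : ℤ := ⌊f p⌋ with hn'def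
    have hn'fp : (n':ℝ) ≤ f p := Int.floor_le _
    have hfpn1 : f p < (n':ℝ) + 1 := Int.lt_floor_add_one _
    have hn'1 : L + z₀ ≤ n' := by
      apply Int.le_floor.2
      rw [hfL] at hfLp
      push_cast
      linarith
    have hn'2 : n' + 1 ≤ R - z₁ := by
      have h1 : (n':ℝ) < ((R - z₁ : ℤ):ℝ) := by
        rw [hfR] at hfqR
        push_cast
        linarith
      have : n' < R - z₁ := by exact_mod_cast h1
      omega
    have hfq_n1 : f q ≤ (n':ℝ) + 1 := by
      by_contra hc
      push_neg at hc
      have hmem : f.symm (((n' + 1 : ℤ)):ℝ) ∈ T := hF2 (n'+1) (by omega) hn'2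
      have hx1 : p < f.symm ((n' + 1 : ℤ):ℝ) := by
        rw [← f.symm_apply_apply p]
        apply f.symm.strictMono
        push_cast
        linarith
      have hx2 : f.symm ((n' + 1 : ℤ):ℝ) < q := by
        rw [← f.symm_apply_apply q]
        apply f.symm.strictMono
        push_cast
        linarith
      rcases hcons _ hmem with h' | h'
      · linarith
      · linarith
    obtain ⟨c, hc⟩ := phi_affine n
    obtain ⟨c', hc'⟩ := phi_affine n'
    refine ⟨zg + c - c', fun s hs => ?_⟩
    have e_s := hc s ⟨le_trans hnp hs.1, le_trans hs.2 hq_n1⟩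
    have e_p := hc p ⟨hnp, le_trans hpq.le hq_n1⟩
    have e_G := hzg (phi s) ⟨phi_strictMono.monotone hs.1, phi_strictMono.monotone hs.2⟩
    have e_fs : phi (f s) = (extIcc g) (phi s) := phi_lowerIso g s
    have e_fp : phi (f p) = (extIcc g) (phi p) := phi_lowerIso g p
    have e_cs := hc' (f s) ⟨le_trans hn'fp (f.monotone hs.1), le_trans (f.monotone hs.2) hfq_n1⟩
    have e_cp := hc' (f p) ⟨hn'fp, le_trans hfpq.le hfq_n1⟩
    have h2c' : (2:ℝ) ^ c' ≠ 0 := by positivity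
    have key : (2:ℝ) ^ c' * (f s - f p) = 2 ^ zg * (2 ^ c * (s - p)) := by
      have d1 : (2:ℝ) ^ c' * (f s - f p) = phi (f s) - phi (f p) := by
        rw [e_cs, e_cp]; ring
      have d2 : phi s - phi p = 2 ^ c * (s - p) := by rw [e_s, e_p]; ring
      rw [d1, e_fs, e_fp, e_G, d2]
    have e9 : (2:ℝ) ^ c' * (2:ℝ) ^ (zg + c - c') = 2 ^ zg * 2 ^ c := by
      rw [← zpow_add₀ (two_ne_zero : (2:ℝ) ≠ 0), ← zpow_add₀ (two_ne_zero : (2:ℝ) ≠ 0)]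
      congr 1
      ring
    apply mul_left_cancel₀ h2c'
    calc (2:ℝ) ^ c' * (f s - f p) = 2 ^ zg * (2 ^ c * (s - p)) := key
    _ = ((2:ℝ) ^ zg * 2 ^ c) * (s - p) := by ring
    _ = ((2:ℝ) ^ c' * 2 ^ (zg + c - c')) * (s - p) := by rw [e9]
    _ = 2 ^ c' * (2 ^ (zg + c - c') * (s - p)) := by ring
  have hmin : T.min' hPLP.nonempty = (L:ℝ) :=
    PLP.min'_eq _ (hF1 L (le_refl _) (by omega)) (fun x hx => (hbound x hx).1)
  have hmax : T.max' hPLP.nonempty = (R:ℝ) :=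
    PLP.max'_eq _ (hF1 R (by omega) (le_refl _)) (fun x hx => (hbound x hx).2)
  refine ⟨T, hPLP, -z₀, z₁, ?_, ?_⟩
  · intro s hs
    rw [hmin] at hs
    exact htail_a s hs
  · intro s hs
    rw [hmax] at hs
    exact htail_b s hs

/-! ### IsPL2R equals PL2Rp -/

lemma isPL2R_iff_pl2Rp {f : ℝ ≃o ℝ} : IsPL2R f ↔ PL2Rp f := by
  classical
  constructor
  · rintro ⟨m, t, z, a, b, hmono, hdy, ha, hb, hz⟩
    set T : Finset ℝ := Finset.image t Finset.univ with hT
    have hmem : ∀ i, t i ∈ T := fun i => Finset.mem_image_of_mem t (Finset.mem_univ i)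
    have hne : T.Nonempty := ⟨t 0, hmem 0⟩
    have hPLP : PLP f T := by
      refine ⟨hne, ?_, ?_⟩
      · intro x hx
        obtain ⟨i, _, rfl⟩ := Finset.mem_image.1 hx
        exact hdy i
      · intro p hp q hq hpq hcons
        obtain ⟨i, _, rfl⟩ := Finset.mem_image.1 hp
        obtain ⟨j, _, rfl⟩ := Finset.mem_image.1 hq
        have hij : i < j := hmono.lt_iff_lt.1 hpq
        have hj : (j : ℕ) = (i : ℕ) + 1 := by
          by_contra hne'
          have hij' : (i : ℕ) < (j : ℕ) := hij
          have h1 : (i : ℕ) + 1 < (j : ℕ) := by omega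
          have hkm : (i : ℕ) + 1 < m + 1 := by omega
          set k : Fin (m+1) := ⟨(i:ℕ)+1, hkm⟩ with hk
          have hik : i < k := by rw [Fin.lt_def]; simp [hk]
          have hkj : k < j := by rw [Fin.lt_def]; simpa [hk] using h1
          rcases hcons (t k) (hmem k) with h' | h'
          · exact absurd (hmono hik) (not_lt.2 h')
          · exact absurd (hmono hkj) (not_lt.2 h')
        have him : (i : ℕ) < m := by omega
        set i' : Fin m := ⟨i, him⟩ with hi'
        have hcast : i'.castSucc = i := Fin.ext rfl
        have hsucc : i'.succ = j := Fin.ext (by simp [hj, hi'])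
        refine ⟨z i', fun s hs => ?_⟩
        have := hz i' s (by rw [hcast, hsucc]; exact hs)
        rw [hcast] at this
        rw [this]; ring
    have hmin : T.min' hne = t 0 :=
      PLP.min'_eq _ (hmem 0) (by
        intro x hx
        obtain ⟨i, _, rfl⟩ := Finset.mem_image.1 hx
        exact hmono.monotone (Fin.zero_le i))
    have hmax : T.max' hne = t (Fin.last m) :=
      PLP.max'_eq _ (hmem (Fin.last m)) (by
        intro x hx
        obtain ⟨i, _, rfl⟩ := Finset.mem_image.1 hx
        exact hmono.monotone (Fin.le_last i))
    exact ⟨T, hPLP, a, b, by rw [hmin]; exact ha, by rw [hmax]; exact hb⟩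
  · rintro ⟨T, hT, a, b, ha, hb⟩
    set m : ℕ := T.card - 1 with hm
    have hcard : T.card = m + 1 := by
      have := Finset.card_pos.2 hT.nonempty
      omega
    set e := T.orderIsoOfFin hcard with he
    set t : Fin (m + 1) → ℝ := fun i => (e i : ℝ) with ht
    have hmono : StrictMono t := fun i j h => by
      exact_mod_cast e.strictMono h
    have htmem : ∀ i, t i ∈ T := fun i => (e i).2
    have ht0 : t 0 = T.min' hT.nonempty := by
      refine le_antisymm ?_ (Finset.min'_le _ _ (htmem 0))
      apply Finset.le_min'
      intro y hy
      have : e.symm ⟨y, hy⟩ ≥ 0 := Fin.zero_le _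
      have h2 := e.monotone (Fin.zero_le (e.symm ⟨y, hy⟩))
      rw [OrderIso.apply_symm_apply] at h2
      exact_mod_cast h2
    have htlast : t (Fin.last m) = T.max' hT.nonempty := by
      refine le_antisymm (Finset.le_max' _ _ (htmem _)) ?_
      apply Finset.max'_le
      intro y hy
      have h2 := e.monotone (Fin.le_last (e.symm ⟨y, hy⟩))
      rw [OrderIso.apply_symm_apply] at h2
      exact_mod_cast h2
    have hslope : ∀ i : Fin m, ∃ zz : ℤ, ∀ s ∈ Set.Icc (t i.castSucc) (t i.succ),
        f s - f (t i.castSucc) = 2 ^ zz * (s - t i.castSucc) := by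
      intro i
      refine hT.2.2 _ (htmem _) _ (htmem _) (hmono (Fin.castSucc_lt_succ (i := i))) ?_
      intro x hx
      rcases le_or_gt (e.symm ⟨x, hx⟩) i.castSucc with h' | h'
      · left
        have := e.monotone h'
        rw [OrderIso.apply_symm_apply] at this
        exact_mod_cast this
      · right
        have h'' : i.succ ≤ e.symm ⟨x, hx⟩ := by
          rwa [← Fin.castSucc_lt_iff_succ_le]
        have := e.monotone h''
        rw [OrderIso.apply_symm_apply] at this
        exact_mod_cast this
    choose zz hzz using hslope
    refine ⟨m, t, zz, a, b, hmono, fun i => hT.2.1 _ (htmem i), ?_, ?_, ?_⟩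
    · intro s hs; exact ha s (by rwa [← ht0])
    · intro s hs; exact hb s (by rwa [← htlast])
    · intro i s hs
      have := hzz i s hs
      linarith

lemma lowerIso_conjIcc (f : ℝ ≃o ℝ) : lowerIso (conjIcc f) = f :=
  conjIcc_injective (conjIcc_lowerIso (conjIcc f))

/-- `PL₂(ℝ)` and `PL₂(I)` are isomorphic as groups: each is a subgroup of the
group of order-preserving self-homeomorphisms (under composition), and these
two subgroups are isomorphic. -/
theorem pl2R_iso_pl2I :
    ∃ (H : Subgroup (Set.Icc (0:ℝ) 1 ≃o Set.Icc (0:ℝ) 1)) (K : Subgroup (ℝ ≃o ℝ)),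
      (∀ f, f ∈ H ↔ IsPL2I f) ∧ (∀ f, f ∈ K ↔ IsPL2R f) ∧ Nonempty (K ≃* H) := by
  refine ⟨{ carrier := {f | IsPL2I f}
            one_mem' := isPL2I_iff_pl2Ip.2 pl2Ip_one
            mul_mem' := fun ha hb =>
              isPL2I_iff_pl2Ip.2 (pl2Ip_mul (isPL2I_iff_pl2Ip.1 ha) (isPL2I_iff_pl2Ip.1 hb))
            inv_mem' := fun ha => isPL2I_iff_pl2Ip.2 (pl2Ip_inv (isPL2I_iff_pl2Ip.1 ha)) },
         { carrier := {f | IsPL2R f}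
           one_mem' := isPL2R_iff_pl2Rp.2 pl2Rp_one
           mul_mem' := fun ha hb =>
             isPL2R_iff_pl2Rp.2 (pl2Rp_mul (isPL2R_iff_pl2Rp.1 ha) (isPL2R_iff_pl2Rp.1 hb))
           inv_mem' := fun ha => isPL2R_iff_pl2Rp.2 (pl2Rp_inv (isPL2R_iff_pl2Rp.1 ha)) },
         fun f => Iff.rfl, fun f => Iff.rfl, ?_⟩
  constructor
  exact
  { toFun := fun x => ⟨conjIcc x.1,
      isPL2I_iff_pl2Ip.2 (pl2Ip_conj (isPL2R_iff_pl2Rp.1 x.2))⟩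
    invFun := fun y => ⟨lowerIso y.1,
      isPL2R_iff_pl2Rp.2 (pl2Rp_lower (isPL2I_iff_pl2Ip.1 y.2))⟩
    left_inv := fun x => Subtype.ext (lowerIso_conjIcc x.1)
    right_inv := fun y => Subtype.ext (conjIcc_lowerIso y.1)
    map_mul' := fun x y => Subtype.ext (conjIcc_mul x.1 y.1) }
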